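/- arXiv:1908.08909 — 5 statements merged into one kernel-verified Lean document; each statement's English description precedes it below -/
import Mathlib

section
/- Let D ≥ 1 and let μ be the rotation-invariant (uniform) probability measure on the unit sphere S = {u ∈ ℂ^D : ‖u‖ = 1}. For any two Hermitian D×D complex matrices A and B, ∫_S ⟨u, A u⟩ ⟨u, B u⟩ dμ(u) = (tr(A)·tr(B) + tr(A B)) / (D·(D+1)). -/
open MeasureTheory Matrix

noncomputable instance (D : ℕ) : MeasurableSpace (EuclideanSpace ℂ (Fin D)) :=
  MeasurableSpace.comap WithLp.ofLp MeasurableSpace.pi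
instance (D : ℕ) : BorelSpace (EuclideanSpace ℂ (Fin D)) := PiLp.borelSpace 2

/-- The quadratic form `⟨u, A u⟩` of a matrix `A` at a vector `u ∈ ℂ^D`,
with respect to the standard inner product on `ℂ^D`. -/
noncomputable def expval {D : ℕ} (A : Matrix (Fin D) (Fin D) ℂ)
    (u : EuclideanSpace ℂ (Fin D)) : ℂ :=
  inner ℂ u ((Matrix.toEuclideanLin A) u)

namespace SMI
open ComplexConjugate
set_option linter.unusedSectionVars false
variable {D : ℕ}

/-- coordinate monomial -/
noncomputable def mono (i j k l : Fin D) (u : EuclideanSpace ℂ (Fin D)) : ℂ :=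
  conj (u i) * u j * (conj (u k) * u l)

lemma continuous_coord (i : Fin D) : Continuous (fun u : EuclideanSpace ℂ (Fin D) => u i) :=
  (EuclideanSpace.proj i).continuous

lemma continuous_mono (i j k l : Fin D) : Continuous (mono i j k l) := by
  unfold mono
  exact (((Complex.continuous_conj.comp (continuous_coord i)).mul (continuous_coord j)).mul
    ((Complex.continuous_conj.comp (continuous_coord k)).mul (continuous_coord l)))

lemma coord_le_norm (u : EuclideanSpace ℂ (Fin D)) (i : Fin D) : ‖u i‖ ≤ ‖u‖ := by
  have := EuclideanSpace.norm_eq u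
  rw [this]
  have h1 : ‖u i‖ ^ 2 ≤ ∑ j, ‖u j‖ ^ 2 :=
    Finset.single_le_sum (f := fun j => ‖u j‖ ^ 2) (fun j _ => by positivity) (Finset.mem_univ i)
  calc ‖u i‖ = Real.sqrt (‖u i‖ ^ 2) := by rw [Real.sqrt_sq (norm_nonneg _)]
    _ ≤ Real.sqrt (∑ j, ‖u j‖ ^ 2) := Real.sqrt_le_sqrt h1

lemma norm_mono_le (i j k l : Fin D) (u : EuclideanSpace ℂ (Fin D)) (hu : ‖u‖ = 1) :
    ‖mono i j k l u‖ ≤ 1 := by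
  have h : ∀ m : Fin D, ‖u m‖ ≤ 1 := fun m => (coord_le_norm u m).trans (le_of_eq hu)
  unfold mono
  simp only [norm_mul, RCLike.norm_conj]
  calc ‖u i‖ * ‖u j‖ * (‖u k‖ * ‖u l‖) ≤ 1 * 1 * (1 * 1) := by
        gcongr <;> exact h _
    _ = 1 := by ring
variable {D : ℕ}

/-- multiply each coordinate by a unit-norm scalar -/
noncomputable def diagEquiv (c : Fin D → ℂ) (hc : ∀ n, ‖c n‖ = 1) :
    EuclideanSpace ℂ (Fin D) ≃ₗᵢ[ℂ] EuclideanSpace ℂ (Fin D) where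
  toLinearEquiv :=
  { toFun := fun u => (WithLp.toLp 2 (fun n => c n * u n) : EuclideanSpace ℂ (Fin D))
    map_add' := fun u v => PiLp.ext fun n => by
      show c n * (u + v) n = c n * u n + c n * v n
      rw [PiLp.add_apply]; ring
    map_smul' := fun r u => PiLp.ext fun n => by
      show c n * (r • u) n = r * (c n * u n)
      rw [PiLp.smul_apply, smul_eq_mul]; ring
    invFun := fun u => (WithLp.toLp 2 (fun n => (c n)⁻¹ * u n) : EuclideanSpace ℂ (Fin D))
    left_inv := fun u => PiLp.ext fun n => by
      have : c n ≠ 0 := fun h => by simpa [h] using hc n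
      show (c n)⁻¹ * (c n * u n) = u n
      field_simp
    right_inv := fun u => PiLp.ext fun n => by
      have : c n ≠ 0 := fun h => by simpa [h] using hc n
      show c n * ((c n)⁻¹ * u n) = u n
      field_simp }
  norm_map' := fun u => by
    simp only [LinearEquiv.coe_mk]
    rw [EuclideanSpace.norm_eq, EuclideanSpace.norm_eq]
    congr 1
    apply Finset.sum_congr rfl
    intro n _
    show ‖c n * u n‖ ^ 2 = ‖u n‖ ^ 2
    rw [norm_mul, hc n, one_mul]

lemma diagEquiv_apply (c : Fin D → ℂ) (hc : ∀ n, ‖c n‖ = 1) (u : EuclideanSpace ℂ (Fin D))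
    (n : Fin D) : diagEquiv c hc u n = c n * u n := rfl
variable {D : ℕ}

noncomputable def hadFun (a b : Fin D) (u : EuclideanSpace ℂ (Fin D)) :
    EuclideanSpace ℂ (Fin D) :=
  (WithLp.toLp 2 (fun n => if n = a then (u a + u b) / (Real.sqrt 2 : ℝ)
    else if n = b then (u a - u b) / (Real.sqrt 2 : ℝ) else u n) : EuclideanSpace ℂ (Fin D))

lemma sqrt2_ne : ((Real.sqrt 2 : ℝ) : ℂ) ≠ 0 := by
  simp only [ne_eq, Complex.ofReal_eq_zero]
  positivity

lemma sqrt2_sq : ((Real.sqrt 2 : ℝ) : ℂ) * ((Real.sqrt 2 : ℝ) : ℂ) = 2 := by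
  rw [← Complex.ofReal_mul, Real.mul_self_sqrt (by norm_num)]
  norm_num

lemma hadFun_apply_a (a b : Fin D) (u : EuclideanSpace ℂ (Fin D)) :
    hadFun a b u a = (u a + u b) / (Real.sqrt 2 : ℝ) := by simp [hadFun]

lemma hadFun_apply_b (a b : Fin D) (hab : a ≠ b) (u : EuclideanSpace ℂ (Fin D)) :
    hadFun a b u b = (u a - u b) / (Real.sqrt 2 : ℝ) := by simp [hadFun, hab.symm]

lemma hadFun_apply_other (a b n : Fin D) (h1 : n ≠ a) (h2 : n ≠ b)
    (u : EuclideanSpace ℂ (Fin D)) : hadFun a b u n = u n := by simp [hadFun, h1, h2]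

lemma hadFun_invol (a b : Fin D) (hab : a ≠ b) (u : EuclideanSpace ℂ (Fin D)) :
    hadFun a b (hadFun a b u) = u := by
  ext n
  by_cases h1 : n = a
  · rw [h1]
    rw [hadFun_apply_a, hadFun_apply_a, hadFun_apply_b a b hab]
    field_simp
    rw [sq, sqrt2_sq]
    ring
  · by_cases h2 : n = b
    · rw [h2]
      rw [hadFun_apply_b a b hab, hadFun_apply_a, hadFun_apply_b a b hab]
      field_simp
      rw [sq, sqrt2_sq]
      ring
    · rw [hadFun_apply_other a b n h1 h2, hadFun_apply_other a b n h1 h2]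

noncomputable def hadEquiv (a b : Fin D) (hab : a ≠ b) :
    EuclideanSpace ℂ (Fin D) ≃ₗᵢ[ℂ] EuclideanSpace ℂ (Fin D) where
  toLinearEquiv :=
  { toFun := hadFun a b
    map_add' := fun u v => PiLp.ext fun n => by
      show hadFun a b (u + v) n = hadFun a b u n + hadFun a b v n
      simp only [hadFun, PiLp.add_apply]
      split_ifs <;> ring
    map_smul' := fun r u => PiLp.ext fun n => by
      show hadFun a b (r • u) n = r * hadFun a b u n
      simp only [hadFun, PiLp.smul_apply, smul_eq_mul]
      split_ifs <;> ring
    invFun := hadFun a b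
    left_inv := fun u => hadFun_invol a b hab u
    right_inv := fun u => hadFun_invol a b hab u }
  norm_map' := fun u => by
    have key : ∀ n : Fin D, ‖hadFun a b u n‖ ^ 2
        = (if n = a then ‖(u a + u b) / ((Real.sqrt 2 : ℝ) : ℂ)‖ ^ 2
          else if n = b then ‖(u a - u b) / ((Real.sqrt 2 : ℝ) : ℂ)‖ ^ 2 else ‖u n‖ ^ 2) := by
      intro n
      by_cases h1 : n = a
      · rw [h1, hadFun_apply_a, if_pos rfl]
      · by_cases h2 : n = b
        · rw [h2, hadFun_apply_b a b hab]
          rw [← h2, if_neg h1, h2, if_pos rfl]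
        · rw [hadFun_apply_other a b n h1 h2, if_neg h1, if_neg h2]
    show ‖hadFun a b u‖ = ‖u‖
    rw [EuclideanSpace.norm_eq, EuclideanSpace.norm_eq]
    congr 1
    rw [Finset.sum_congr rfl (fun n _ => key n)]
    have hb : b ∈ (Finset.univ.erase a) := Finset.mem_erase.2 ⟨Ne.symm hab, Finset.mem_univ b⟩
    have ha : a ∈ (Finset.univ : Finset (Fin D)) := Finset.mem_univ a
    have hrhs : ∑ n, ‖u n‖ ^ 2
        = ‖u a‖ ^ 2 + (‖u b‖ ^ 2 + ∑ n ∈ (Finset.univ.erase a).erase b, ‖u n‖ ^ 2) := by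
      rw [← Finset.add_sum_erase _ _ ha, ← Finset.add_sum_erase _ _ hb]
    rw [← Finset.add_sum_erase _ _ ha, ← Finset.add_sum_erase _ _ hb, hrhs]
    have hsum : ∀ n ∈ (Finset.univ.erase a).erase b,
        (if n = a then ‖(u a + u b) / ((Real.sqrt 2 : ℝ) : ℂ)‖ ^ 2
          else if n = b then ‖(u a - u b) / ((Real.sqrt 2 : ℝ) : ℂ)‖ ^ 2 else ‖u n‖ ^ 2)
        = ‖u n‖ ^ 2 := by
      intro n hn
      rw [Finset.mem_erase] at hn
      have hn2 := Finset.mem_erase.1 hn.2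
      rw [if_neg hn2.1, if_neg hn.1]
    rw [Finset.sum_congr rfl hsum, if_pos rfl, if_neg (Ne.symm hab), if_pos rfl]
    have hpar : ‖(u a + u b) / ((Real.sqrt 2 : ℝ) : ℂ)‖ ^ 2
        + ‖(u a - u b) / ((Real.sqrt 2 : ℝ) : ℂ)‖ ^ 2 = ‖u a‖ ^ 2 + ‖u b‖ ^ 2 := by
      have hs : ‖((Real.sqrt 2 : ℝ) : ℂ)‖ = Real.sqrt 2 := by
        rw [Complex.norm_real, Real.norm_eq_abs, abs_of_nonneg (Real.sqrt_nonneg 2)]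
      rw [norm_div, norm_div, hs, div_pow, div_pow, Real.sq_sqrt (by norm_num : (2:ℝ) ≥ 0)]
      have := parallelogram_law_with_norm ℝ (u a) (u b)
      nlinarith [this]
    linarith [hpar]

lemma hadEquiv_apply (a b : Fin D) (hab : a ≠ b) (u : EuclideanSpace ℂ (Fin D)) :
    hadEquiv a b hab u = hadFun a b u := rfl

variable (μ : Measure (EuclideanSpace ℂ (Fin D))) [IsProbabilityMeasure μ]

lemma integral_comp
    (hinv : ∀ U : EuclideanSpace ℂ (Fin D) ≃ₗᵢ[ℂ] EuclideanSpace ℂ (Fin D), μ.map U = μ)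
    (U : EuclideanSpace ℂ (Fin D) ≃ₗᵢ[ℂ] EuclideanSpace ℂ (Fin D))
    (f : EuclideanSpace ℂ (Fin D) → ℂ) (hf : AEStronglyMeasurable f μ) :
    ∫ u, f u ∂μ = ∫ u, f (U u) ∂μ := by
  conv_lhs => rw [← hinv U]
  exact integral_map (U.continuous.measurable.aemeasurable) (by rw [hinv U]; exact hf)

noncomputable def pc (m : Fin D) : EuclideanSpace ℂ (Fin D) ≃ₗᵢ[ℂ] EuclideanSpace ℂ (Fin D) :=
  diagEquiv (fun n => if n = m then Complex.I else 1)
    (fun n => by by_cases h : n = m <;> simp [h])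

lemma phase_rel
    (hinv : ∀ U : EuclideanSpace ℂ (Fin D) ≃ₗᵢ[ℂ] EuclideanSpace ℂ (Fin D), μ.map U = μ)
    (i j k l m : Fin D) :
    ∫ u, mono i j k l u ∂μ
      = ((if i = m then -Complex.I else 1) * (if j = m then Complex.I else 1)
        * ((if k = m then -Complex.I else 1) * (if l = m then Complex.I else 1)))
        * ∫ u, mono i j k l u ∂μ := by
  have h1 : ∫ u, mono i j k l u ∂μ = ∫ u, mono i j k l (pc m u) ∂μ :=
    integral_comp μ hinv (pc m) _ (continuous_mono i j k l).aestronglyMeasurable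
  have h2 : ∀ u, mono i j k l (pc m u)
      = ((if i = m then -Complex.I else 1) * (if j = m then Complex.I else 1)
        * ((if k = m then -Complex.I else 1) * (if l = m then Complex.I else 1))) * mono i j k l u := by
    intro u
    simp only [mono, pc, diagEquiv_apply, _root_.map_mul, apply_ite (starRingEnd ℂ),
      Complex.conj_I, _root_.map_one]
    ring
  calc ∫ u, mono i j k l u ∂μ = ∫ u, mono i j k l (pc m u) ∂μ := h1
    _ = _ := by
        rw [← integral_const_mul]
        exact integral_congr_ae (Filter.Eventually.of_forall h2)

noncomputable def permEquiv (σ : Equiv.Perm (Fin D)) :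
    EuclideanSpace ℂ (Fin D) ≃ₗᵢ[ℂ] EuclideanSpace ℂ (Fin D) :=
  LinearIsometryEquiv.piLpCongrLeft 2 ℂ ℂ σ.symm

lemma permEquiv_apply (σ : Equiv.Perm (Fin D)) (u : EuclideanSpace ℂ (Fin D)) (n : Fin D) :
    permEquiv σ u n = u (σ n) := by
  simp [permEquiv, LinearIsometryEquiv.piLpCongrLeft_apply, Equiv.piCongrLeft'_apply]

lemma perm_rel
    (hinv : ∀ U : EuclideanSpace ℂ (Fin D) ≃ₗᵢ[ℂ] EuclideanSpace ℂ (Fin D), μ.map U = μ)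
    (σ : Equiv.Perm (Fin D)) (i j k l : Fin D) :
    ∫ u, mono i j k l u ∂μ = ∫ u, mono (σ i) (σ j) (σ k) (σ l) u ∂μ := by
  rw [integral_comp μ hinv (permEquiv σ) _ (continuous_mono i j k l).aestronglyMeasurable]
  apply integral_congr_ae
  apply Filter.Eventually.of_forall
  intro u
  simp [mono, permEquiv_apply]

lemma Mzero
    (hinv : ∀ U : EuclideanSpace ℂ (Fin D) ≃ₗᵢ[ℂ] EuclideanSpace ℂ (Fin D), μ.map U = μ)
    (i j k l : Fin D) (h1 : ¬(i = j ∧ k = l)) (h2 : ¬(i = l ∧ j = k)) :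
    ∫ u, mono i j k l u ∂μ = 0 := by
  by_contra hM
  have key : ∀ m : Fin D,
      ((if i = m then -Complex.I else 1) * (if j = m then Complex.I else 1)
        * ((if k = m then -Complex.I else 1) * (if l = m then Complex.I else 1))) = 1 := by
    intro m
    have h := phase_rel μ hinv i j k l m
    have h3 : (((if i = m then -Complex.I else 1) * (if j = m then Complex.I else 1)
        * ((if k = m then -Complex.I else 1) * (if l = m then Complex.I else 1))) - 1)
        * ∫ u, mono i j k l u ∂μ = 0 := by linear_combination -h
    rcases mul_eq_zero.1 h3 with h4 | h4
    · linear_combination h4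
    · exact absurd h4 hM
  by_cases hji : j = i
  · subst hji
    have hkl : ¬ k = l := fun h => h1 ⟨rfl, h⟩
    have t := key k
    split_ifs at t <;> simp_all [Complex.ext_iff]
  · by_cases hki : k = i <;> by_cases hli : l = i
    · have t := key i
      rw [if_pos rfl, if_neg hji, if_pos hki, if_pos hli] at t
      norm_num [Complex.ext_iff] at t
    · have t := key i
      rw [if_pos rfl, if_neg hji, if_pos hki, if_neg hli] at t
      norm_num [Complex.ext_iff] at t
    · have hjk : ¬ j = k := fun h => h2 ⟨hli.symm, h⟩
      have t := key k
      rw [if_neg (fun h : i = k => hki h.symm), if_neg hjk, if_pos rfl,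
        if_neg (fun h : l = k => hki (hli.symm.trans h).symm)] at t
      norm_num [Complex.ext_iff] at t
    · have t := key i
      rw [if_pos rfl, if_neg hji, if_neg hki, if_neg hli] at t
      norm_num [Complex.ext_iff] at t

lemma integrable_mono (hsupp : ∀ᵐ u ∂μ, ‖u‖ = 1) (i j k l : Fin D) :
    Integrable (mono i j k l) μ :=
  Integrable.mono' (integrable_const 1) (continuous_mono i j k l).aestronglyMeasurable
    (hsupp.mono fun u hu => norm_mono_le i j k l u hu)

lemma had_rel (hsupp : ∀ᵐ u ∂μ, ‖u‖ = 1)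
    (hinv : ∀ U : EuclideanSpace ℂ (Fin D) ≃ₗᵢ[ℂ] EuclideanSpace ℂ (Fin D), μ.map U = μ)
    (a b : Fin D) (hab : a ≠ b) :
    ∫ u, mono a a a a u ∂μ = 2 * ∫ u, mono a a b b u ∂μ := by
  set v : Fin 16 → (EuclideanSpace ℂ (Fin D) → ℂ) :=
    ![mono a a a a, mono a a a b, mono a b a a, mono a b a b,
      mono a a b a, mono a a b b, mono a b b a, mono a b b b,
      mono b a a a, mono b a a b, mono b b a a, mono b b a b,
      mono b a b a, mono b a b b, mono b b b a, mono b b b b] with hv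
  have hs : ((Real.sqrt 2 : ℝ) : ℂ) ^ 2 = 2 := by rw [sq]; exact sqrt2_sq
  have hexp : ∀ u, mono a a a a (hadEquiv a b hab u)
      = (1/4 : ℂ) * ∑ t : Fin 16, v t u := by
    intro u
    have hrhs : ∑ t : Fin 16, v t u
        = mono a a a a u + mono a a a b u + mono a b a a u + mono a b a b u
        + mono a a b a u + mono a a b b u + mono a b b a u + mono a b b b u
        + mono b a a a u + mono b a a b u + mono b b a a u + mono b b a b u
        + mono b a b a u + mono b a b b u + mono b b b a u + mono b b b b u := by
      simp [hv, Fin.sum_univ_succ]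
      ring
    rw [hrhs]
    simp only [mono, hadEquiv_apply, hadFun_apply_a a b u, map_div₀, map_add,
      Complex.conj_ofReal]
    field_simp
    linear_combination (-((starRingEnd ℂ) (u a) + (starRingEnd ℂ) (u b))^2 * (u a + u b)^2
      * (((Real.sqrt 2 : ℝ) : ℂ)^2 + 2)) * hs
  have h1 : ∫ u, mono a a a a u ∂μ = ∫ u, mono a a a a (hadEquiv a b hab u) ∂μ :=
    integral_comp μ hinv (hadEquiv a b hab) _ (continuous_mono a a a a).aestronglyMeasurable
  have hInt : ∀ t : Fin 16, Integrable (v t) μ := by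
    intro t
    fin_cases t <;> exact integrable_mono μ hsupp _ _ _ _
  have h2 : ∫ u, mono a a a a (hadEquiv a b hab u) ∂μ
      = (1/4 : ℂ) * ∑ t : Fin 16, ∫ u, v t u ∂μ := by
    rw [integral_congr_ae (Filter.Eventually.of_forall hexp), integral_const_mul,
      integral_finset_sum _ (fun t _ => hInt t)]
  -- zero terms
  have z1 : ∫ u, mono a a a b u ∂μ = 0 :=
    Mzero μ hinv a a a b (fun h => hab h.2) (fun h => hab h.1)
  have z2 : ∫ u, mono a b a a u ∂μ = 0 :=
    Mzero μ hinv a b a a (fun h => hab h.1) (fun h => hab h.2.symm)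
  have z3 : ∫ u, mono a b a b u ∂μ = 0 :=
    Mzero μ hinv a b a b (fun h => hab h.1) (fun h => hab h.1)
  have z4 : ∫ u, mono a a b a u ∂μ = 0 :=
    Mzero μ hinv a a b a (fun h => hab h.2.symm) (fun h => hab h.2)
  have z5 : ∫ u, mono a b b b u ∂μ = 0 :=
    Mzero μ hinv a b b b (fun h => hab h.1) (fun h => hab h.1)
  have z6 : ∫ u, mono b a a a u ∂μ = 0 :=
    Mzero μ hinv b a a a (fun h => hab h.1.symm) (fun h => hab h.1.symm)
  have z7 : ∫ u, mono b a b a u ∂μ = 0 :=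
    Mzero μ hinv b a b a (fun h => hab h.1.symm) (fun h => hab h.1.symm)
  have z8 : ∫ u, mono b a b b u ∂μ = 0 :=
    Mzero μ hinv b a b b (fun h => hab h.1.symm) (fun h => hab h.2)
  have z9 : ∫ u, mono b b a b u ∂μ = 0 :=
    Mzero μ hinv b b a b (fun h => hab h.2) (fun h => hab h.2.symm)
  have z10 : ∫ u, mono b b b a u ∂μ = 0 :=
    Mzero μ hinv b b b a (fun h => hab h.2.symm) (fun h => hab h.1.symm)
  -- value identifications
  have e1 : ∫ u, mono b b b b u ∂μ = ∫ u, mono a a a a u ∂μ := by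
    have := perm_rel μ hinv (Equiv.swap a b) a a a a
    simpa [Equiv.swap_apply_left] using this.symm
  have e2 : ∫ u, mono b b a a u ∂μ = ∫ u, mono a a b b u ∂μ := by
    have := perm_rel μ hinv (Equiv.swap a b) a a b b
    simpa [Equiv.swap_apply_left, Equiv.swap_apply_right] using this.symm
  have e3 : ∫ u, mono a b b a u ∂μ = ∫ u, mono a a b b u ∂μ := by
    apply integral_congr_ae
    apply Filter.Eventually.of_forall
    intro u
    simp only [mono]
    ring
  have e4 : ∫ u, mono b a a b u ∂μ = ∫ u, mono a a b b u ∂μ := by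
    have h5 : ∫ u, mono b a a b u ∂μ = ∫ u, mono b b a a u ∂μ := by
      apply integral_congr_ae
      apply Filter.Eventually.of_forall
      intro u
      simp only [mono]
      ring
    rw [h5, e2]
  have hsum : ∑ t : Fin 16, ∫ u, v t u ∂μ
      = 2 * (∫ u, mono a a a a u ∂μ) + 4 * ∫ u, mono a a b b u ∂μ := by
    simp only [hv, Fin.sum_univ_succ, Fin.sum_univ_zero, Matrix.cons_val_zero,
      Matrix.cons_val_succ]
    rw [z1, z2, z3, z4, z5, z6, z7, z8, z9, z10, e1, e2, e3, e4]
    ring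
  rw [h2, hsum] at h1
  linear_combination 2 * h1

lemma sum_sq_one (u : EuclideanSpace ℂ (Fin D)) (hu : ‖u‖ = 1) :
    ∑ i, conj (u i) * u i = (1 : ℂ) := by
  have h1 : ∀ i, conj (u i) * u i = ((‖u i‖ ^ 2 : ℝ) : ℂ) := fun i => (RCLike.conj_mul (u i)).trans (by norm_cast)
  rw [Finset.sum_congr rfl (fun i _ => h1 i), ← Complex.ofReal_sum]
  have h2 : ∑ i, ‖u i‖ ^ 2 = 1 := by
    have := EuclideanSpace.norm_eq u
    rw [hu] at this
    have := (Real.sqrt_eq_one.1 this.symm)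
    linarith [this]
  rw [h2, Complex.ofReal_one]

lemma norm_one_rel (hsupp : ∀ᵐ u ∂μ, ‖u‖ = 1) :
    ∑ i : Fin D, ∑ k : Fin D, ∫ u, mono i i k k u ∂μ = 1 := by
  have h1 : ∫ u, ∑ i : Fin D, ∑ k : Fin D, mono i i k k u ∂μ = 1 := by
    have hae : ∀ᵐ u ∂μ, (∑ i : Fin D, ∑ k : Fin D, mono i i k k u) = (1 : ℂ) := by
      filter_upwards [hsupp] with u hu
      have : ∑ i : Fin D, ∑ k : Fin D, mono i i k k u
          = (∑ i, conj (u i) * u i) * (∑ k, conj (u k) * u k) := by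
        rw [Finset.sum_mul_sum]
        rfl
      rw [this, sum_sq_one u hu, one_mul]
    rw [integral_congr_ae hae, integral_const, probReal_univ]
    simp
  rw [← h1, integral_finset_sum _ (fun i _ => integrable_finset_sum _
    (fun k _ => integrable_mono μ hsupp i i k k))]
  exact Finset.sum_congr rfl (fun i _ => by
    rw [integral_finset_sum _ (fun k _ => integrable_mono μ hsupp i i k k)])

lemma diag_const
    (hinv : ∀ U : EuclideanSpace ℂ (Fin D) ≃ₗᵢ[ℂ] EuclideanSpace ℂ (Fin D), μ.map U = μ)
    (i i' : Fin D) : ∫ u, mono i i i i u ∂μ = ∫ u, mono i' i' i' i' u ∂μ := by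
  have := perm_rel μ hinv (Equiv.swap i i') i i i i
  simpa [Equiv.swap_apply_left] using this

lemma q_val (hD : 1 ≤ D) (hsupp : ∀ᵐ u ∂μ, ‖u‖ = 1)
    (hinv : ∀ U : EuclideanSpace ℂ (Fin D) ≃ₗᵢ[ℂ] EuclideanSpace ℂ (Fin D), μ.map U = μ)
    (i : Fin D) :
    ∫ u, mono i i i i u ∂μ = 2 / ((D : ℂ) * ((D : ℂ) + 1)) := by
  set q := ∫ u, mono i i i i u ∂μ with hq
  have hVal : ∀ i' k' : Fin D, ∫ u, mono i' i' k' k' u ∂μ = if i' = k' then q else q / 2 := by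
    intro i' k'
    by_cases h : i' = k'
    · rw [if_pos h, ← h]
      exact diag_const μ hinv i' i
    · rw [if_neg h]
      have h2 := had_rel μ hsupp hinv i' k' h
      have h3 := diag_const μ hinv i' i
      rw [h3, ← hq] at h2
      linear_combination (-1/2 : ℂ) * h2
  have hnorm := norm_one_rel μ hsupp
  rw [Finset.sum_congr rfl (fun i' _ => Finset.sum_congr rfl (fun k' _ => hVal i' k'))] at hnorm
  have hrow : ∀ i' : Fin D, ∑ k' : Fin D, (if i' = k' then q else q / 2)
      = (D : ℂ) * (q / 2) + q / 2 := by
    intro i'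
    have h4 : ∀ k' : Fin D, (if i' = k' then q else q / 2)
        = q / 2 + (if i' = k' then q / 2 else 0) := by
      intro k'; split_ifs <;> ring
    rw [Finset.sum_congr rfl (fun k' _ => h4 k'), Finset.sum_add_distrib, Finset.sum_const,
      Finset.sum_ite_eq _ i' (fun _ => q / 2)]
    simp [Finset.card_univ]
  rw [Finset.sum_congr rfl (fun i' _ => hrow i'), Finset.sum_const, Finset.card_univ] at hnorm
  simp only [Fintype.card_fin, nsmul_eq_mul] at hnorm
  have hD0 : (D : ℂ) ≠ 0 := Nat.cast_ne_zero.2 (by omega)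
  have hD1 : (D : ℂ) + 1 ≠ 0 := by
    have : ((D + 1 : ℕ) : ℂ) ≠ 0 := Nat.cast_ne_zero.2 (by omega)
    push_cast at this
    exact this
  field_simp
  linear_combination 2 * hnorm

lemma Mval (hD : 1 ≤ D) (hsupp : ∀ᵐ u ∂μ, ‖u‖ = 1)
    (hinv : ∀ U : EuclideanSpace ℂ (Fin D) ≃ₗᵢ[ℂ] EuclideanSpace ℂ (Fin D), μ.map U = μ)
    (i j k l : Fin D) :
    ∫ u, mono i j k l u ∂μ
      = ((if i = j then (1:ℂ) else 0) * (if k = l then (1:ℂ) else 0)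
        + (if i = l then (1:ℂ) else 0) * (if j = k then (1:ℂ) else 0))
        / ((D : ℂ) * ((D : ℂ) + 1)) := by
  have offdiag : ∀ i' k' : Fin D, i' ≠ k' →
      ∫ u, mono i' i' k' k' u ∂μ = 1 / ((D : ℂ) * ((D : ℂ) + 1)) := by
    intro i' k' h
    have h2 := had_rel μ hsupp hinv i' k' h
    rw [q_val μ hD hsupp hinv i'] at h2
    have hD0 : (D : ℂ) ≠ 0 := Nat.cast_ne_zero.2 (by omega)
    have hD1 : (D : ℂ) + 1 ≠ 0 := by
      have : ((D + 1 : ℕ) : ℂ) ≠ 0 := Nat.cast_ne_zero.2 (by omega)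
      push_cast at this
      exact this
    field_simp at h2 ⊢
    linear_combination (-1 : ℂ) * h2
  by_cases hij : i = j
  · subst hij
    by_cases hkl : k = l
    · subst hkl
      by_cases hik : i = k
      · subst hik
        rw [q_val μ hD hsupp hinv i]
        norm_num
      · rw [offdiag i k hik]
        simp [hik]
    · have h2 : ¬(i = l ∧ i = k) := by
        rintro ⟨h3, h4⟩
        exact hkl (h4.symm.trans h3)
      rw [Mzero μ hinv i i k l (fun h => hkl h.2) h2]
      rcases not_and_or.1 h2 with h3 | h3 <;> simp [hkl, h3]
  · by_cases hil : i = l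
    · by_cases hjk : j = k
      · subst hil
        subst hjk
        have e : ∫ u, mono i j j i u ∂μ = ∫ u, mono i i j j u ∂μ := by
          apply integral_congr_ae
          apply Filter.Eventually.of_forall
          intro u
          simp only [mono]
          ring
        rw [e, offdiag i j hij]
        simp [hij, fun h : j = i => hij h.symm]
      · rw [Mzero μ hinv i j k l (fun h => hij h.1) (fun h => hjk h.2)]
        simp [hij, hjk]
    · rw [Mzero μ hinv i j k l (fun h => hij h.1) (fun h => hil h.1)]
      simp [hij, hil]

lemma expval_eq (A : Matrix (Fin D) (Fin D) ℂ) (u : EuclideanSpace ℂ (Fin D)) :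
    expval A u = ∑ p : Fin D × Fin D, A p.1 p.2 * (conj (u p.1) * u p.2) := by
  rw [Fintype.sum_prod_type]
  simp only [expval, PiLp.inner_apply, RCLike.inner_apply, Matrix.toEuclideanLin_apply,
    PiLp.toLp_apply, Matrix.mulVec, dotProduct, WithLp.ofLp_toLp,
    Finset.mul_sum, Finset.sum_mul]
  apply Finset.sum_congr rfl
  intro i _
  apply Finset.sum_congr rfl
  intro j _
  ring

end SMI

/-- second-moment identity for uniformly random pure states:
for the rotation-invariant (uniform) probability measure `μ` on the unit sphere of `ℂ^D`
and Hermitian matrices `A`, `B`,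
`∫ ⟨u,Au⟩⟨u,Bu⟩ dμ(u) = (tr A · tr B + tr (AB)) / (D(D+1))`. -/
theorem second_moment_identity (D : ℕ) (hD : 1 ≤ D)
    (μ : Measure (EuclideanSpace ℂ (Fin D))) [IsProbabilityMeasure μ]
    (hsupp : ∀ᵐ u ∂μ, ‖u‖ = 1)
    (hinv : ∀ U : EuclideanSpace ℂ (Fin D) ≃ₗᵢ[ℂ] EuclideanSpace ℂ (Fin D),
      μ.map U = μ)
    (A B : Matrix (Fin D) (Fin D) ℂ) (hA : A.IsHermitian) (hB : B.IsHermitian) :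
    ∫ u, expval A u * expval B u ∂μ
      = (A.trace * B.trace + (A * B).trace) / ((D : ℂ) * ((D : ℂ) + 1)) := by
  classical
  have hprod : ∀ u, expval A u * expval B u
      = ∑ p : (Fin D × Fin D) × Fin D × Fin D,
          (A p.1.1 p.1.2 * B p.2.1 p.2.2) * SMI.mono p.1.1 p.1.2 p.2.1 p.2.2 u := by
    intro u
    rw [SMI.expval_eq A u, SMI.expval_eq B u, Finset.sum_mul_sum]
    conv_rhs => rw [Fintype.sum_prod_type]
    apply Finset.sum_congr rfl
    rintro ⟨i, j⟩ -
    apply Finset.sum_congr rfl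
    rintro ⟨k, l⟩ -
    simp only [SMI.mono]
    ring
  rw [integral_congr_ae (Filter.Eventually.of_forall hprod),
    integral_finset_sum _ (fun p _ =>
      (SMI.integrable_mono μ hsupp p.1.1 p.1.2 p.2.1 p.2.2).const_mul _)]
  have hval : ∀ p : (Fin D × Fin D) × Fin D × Fin D,
      ∫ u, (A p.1.1 p.1.2 * B p.2.1 p.2.2) * SMI.mono p.1.1 p.1.2 p.2.1 p.2.2 u ∂μ
      = (A p.1.1 p.1.2 * B p.2.1 p.2.2)
        * (((if p.1.1 = p.1.2 then (1:ℂ) else 0) * (if p.2.1 = p.2.2 then (1:ℂ) else 0)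
          + (if p.1.1 = p.2.2 then (1:ℂ) else 0) * (if p.1.2 = p.2.1 then (1:ℂ) else 0))
          / ((D : ℂ) * ((D : ℂ) + 1))) := fun p => by
    rw [integral_const_mul, SMI.Mval μ hD hsupp hinv]
  rw [Finset.sum_congr rfl (fun p _ => hval p)]
  simp_rw [← mul_div_assoc]
  rw [← Finset.sum_div]
  congr 1
  rw [Fintype.sum_prod_type]
  simp only [mul_add, mul_ite, ite_mul, mul_zero, zero_mul, mul_one, one_mul,
    Finset.sum_add_distrib, Fintype.sum_prod_type]
  rw [Matrix.trace, Matrix.trace]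
  simp only [Matrix.diag, Matrix.mul_apply, Finset.sum_ite_eq, Finset.sum_ite_eq',
    Finset.mem_univ, if_true, Finset.mul_sum, Finset.sum_mul]
  simp only [Finset.sum_ite_irrel, Finset.sum_const_zero, Finset.sum_ite_eq,
    Finset.mem_univ, if_true, Matrix.trace, Matrix.diag, Matrix.mul_apply]
  congr 1
  rw [Finset.sum_comm]
end

section
/- Let D ≥ 1 and let μ be the rotation-invariant (uniform) probability measure on the unit sphere S = {u ∈ ℂ^D : ‖u‖ = 1}. For any Hermitian D×D complex matrix A, the matrix-valued integral satisfies D·(D+1)·∫_S ⟨u, A u⟩ · (u u*) dμ(u) = A + tr(A)·I, where u u* denotes the rank-one matrix with entries u_i·conj(u_j) and I is the D×D identity matrix. -/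
open MeasureTheory Matrix

namespace SecondMomentAux

variable {D : ℕ}

/-- The basic monomial `u a * conj (u b) * (u c * conj (u d))`. -/
noncomputable def mono (a b c d : Fin D) (u : EuclideanSpace ℂ (Fin D)) : ℂ :=
  u a * (starRingEnd ℂ) (u b) * (u c * (starRingEnd ℂ) (u d))

lemma continuous_coord (a : Fin D) :
    Continuous fun u : EuclideanSpace ℂ (Fin D) => u a :=
  (EuclideanSpace.proj (𝕜 := ℂ) a).continuous

lemma continuous_mono (a b c d : Fin D) : Continuous (mono a b c d) := by
  unfold mono
  exact ((continuous_coord a).mul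
      (continuous_star.comp (continuous_coord b))).mul
    ((continuous_coord c).mul (continuous_star.comp (continuous_coord d)))

variable (μ : Measure (EuclideanSpace ℂ (Fin D))) [IsProbabilityMeasure μ]

lemma integrable_of_cont (hsupp : ∀ᵐ u ∂μ, ‖u‖ = 1)
    {f : EuclideanSpace ℂ (Fin D) → ℂ} (hf : Continuous f) : Integrable f μ := by
  obtain ⟨C, hC⟩ := (isCompact_sphere (0 : EuclideanSpace ℂ (Fin D)) 1).exists_bound_of_continuousOn
    hf.continuousOn
  refine ⟨hf.aestronglyMeasurable, HasFiniteIntegral.of_bounded (C := C) ?_⟩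
  filter_upwards [hsupp] with u hu
  exact hC u (by simpa [mem_sphere_zero_iff_norm] using hu)

lemma int_mono (hsupp : ∀ᵐ u ∂μ, ‖u‖ = 1) (a b c d : Fin D) :
    Integrable (mono a b c d) μ :=
  integrable_of_cont μ hsupp (continuous_mono a b c d)

lemma integral_comp
    (hinv : ∀ U : EuclideanSpace ℂ (Fin D) ≃ₗᵢ[ℂ] EuclideanSpace ℂ (Fin D), μ.map U = μ)
    (U : EuclideanSpace ℂ (Fin D) ≃ₗᵢ[ℂ] EuclideanSpace ℂ (Fin D))
    {f : EuclideanSpace ℂ (Fin D) → ℂ} (hf : Continuous f) :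
    ∫ u, f (U u) ∂μ = ∫ u, f u ∂μ := by
  have h := integral_map (μ := μ) (φ := fun u => U u)
    (U.continuous.aemeasurable) (f := f)
    (by rw [show μ.map (fun u => U u) = μ from hinv U]; exact hf.aestronglyMeasurable)
  rw [show μ.map (fun u => U u) = μ from hinv U] at h
  exact h.symm

end SecondMomentAux

namespace SecondMomentAux

variable {D : ℕ}

/-- Multiply coordinate `m` by `I`: a unitary map. -/
noncomputable def phaseU (m : Fin D) :
    EuclideanSpace ℂ (Fin D) ≃ₗᵢ[ℂ] EuclideanSpace ℂ (Fin D) where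
  toLinearEquiv :=
    { toFun := fun u => WithLp.toLp 2 (fun k => if k = m then Complex.I * u k else u k)
      map_add' := by
        intro u v; ext k
        by_cases h : k = m <;> simp [h, PiLp.add_apply] <;> ring
      map_smul' := by
        intro c u; ext k
        by_cases h : k = m <;> simp [h, PiLp.smul_apply, smul_eq_mul] <;> ring
      invFun := fun u => WithLp.toLp 2 (fun k => if k = m then -Complex.I * u k else u k)
      left_inv := by
        intro u; ext k
        by_cases h : k = m <;> simp [h]
        rw [← mul_assoc]
        simp [Complex.I_mul_I]
      right_inv := by
        intro u; ext k
        by_cases h : k = m <;> simp [h]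
        rw [← mul_assoc]
        simp [Complex.I_mul_I]
    }
  norm_map' := by
    intro u
    rw [EuclideanSpace.norm_eq, EuclideanSpace.norm_eq]
    congr 1
    refine Finset.sum_congr rfl fun k _ => ?_
    show ‖if k = m then Complex.I * u k else u k‖ ^ 2 = ‖u k‖ ^ 2
    by_cases h : k = m <;> simp [h]

@[simp] lemma phaseU_apply (m : Fin D) (u : EuclideanSpace ℂ (Fin D)) (k : Fin D) :
    phaseU m u k = if k = m then Complex.I * u k else u k := rfl

end SecondMomentAux
namespace SecondMomentAux

variable {D : ℕ}

noncomputable def rt2 : ℂ := (Real.sqrt 2 : ℝ)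

lemma rt2_sq : rt2 * rt2 = 2 := by
  unfold rt2
  norm_cast
  exact Real.mul_self_sqrt (by norm_num)

lemma rt2_ne : rt2 ≠ 0 := by
  intro h
  have := rt2_sq
  rw [h] at this
  norm_num at this

lemma rt2_inv_sq : rt2⁻¹ * rt2⁻¹ = 2⁻¹ := by
  rw [← mul_inv, rt2_sq]

lemma conj_rt2_inv : (starRingEnd ℂ) rt2⁻¹ = rt2⁻¹ := by
  rw [map_inv₀]
  unfold rt2
  rw [Complex.conj_ofReal]

/-- The Hadamard-type rotation mixing coordinates `a` and `b`. -/
noncomputable def hadFun (a b : Fin D) (u : EuclideanSpace ℂ (Fin D)) :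
    EuclideanSpace ℂ (Fin D) :=
  WithLp.toLp 2 fun k => if k = a then rt2⁻¹ * (u a + u b)
    else if k = b then rt2⁻¹ * (u a - u b) else u k

lemma hadFun_apply_a (a b : Fin D) (u : EuclideanSpace ℂ (Fin D)) :
    hadFun a b u a = rt2⁻¹ * (u a + u b) := by simp [hadFun]

lemma hadFun_apply_b (a b : Fin D) (hab : a ≠ b) (u : EuclideanSpace ℂ (Fin D)) :
    hadFun a b u b = rt2⁻¹ * (u a - u b) := by simp [hadFun, Ne.symm hab]

lemma hadFun_apply_other (a b : Fin D) (u : EuclideanSpace ℂ (Fin D)) (k : Fin D)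
    (hka : k ≠ a) (hkb : k ≠ b) : hadFun a b u k = u k := by simp [hadFun, hka, hkb]

lemma hadFun_invol (a b : Fin D) (hab : a ≠ b) (u : EuclideanSpace ℂ (Fin D)) :
    hadFun a b (hadFun a b u) = u := by
  ext k
  by_cases hka : k = a
  · rw [hka, hadFun_apply_a, hadFun_apply_a, hadFun_apply_b a b hab]
    field_simp [rt2_ne]
    linear_combination (-(u a)) * rt2_sq
  · by_cases hkb : k = b
    · rw [hkb, hadFun_apply_b a b hab, hadFun_apply_a, hadFun_apply_b a b hab]
      field_simp [rt2_ne]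
      linear_combination (-(u b)) * rt2_sq
    · rw [hadFun_apply_other a b _ k hka hkb, hadFun_apply_other a b _ k hka hkb]

lemma sum_pair_congr {f g : Fin D → ℝ} (a b : Fin D) (hab : a ≠ b)
    (h : ∀ k, k ≠ a → k ≠ b → f k = g k) (hp : f a + f b = g a + g b) :
    ∑ k, f k = ∑ k, g k := by
  have h0 : ∀ k ∈ Finset.univ, k ∉ ({a, b} : Finset (Fin D)) → f k - g k = 0 := by
    intro k _ hk
    simp only [Finset.mem_insert, Finset.mem_singleton, not_or] at hk
    rw [h k hk.1 hk.2]; ring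
  have h1 := Finset.sum_subset (Finset.subset_univ ({a, b} : Finset (Fin D))) h0
  rw [Finset.sum_pair hab] at h1
  have h2 : ∑ k, (f k - g k) = 0 := by rw [← h1]; linarith
  rw [Finset.sum_sub_distrib] at h2
  linarith

noncomputable def hadU (a b : Fin D) (hab : a ≠ b) :
    EuclideanSpace ℂ (Fin D) ≃ₗᵢ[ℂ] EuclideanSpace ℂ (Fin D) where
  toLinearEquiv :=
    { toFun := hadFun a b
      map_add' := by
        intro u v; ext k
        show hadFun a b (u + v) k = hadFun a b u k + hadFun a b v k
        unfold hadFun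
        simp only [WithLp.ofLp_toLp]
        split_ifs <;> simp [PiLp.add_apply] <;> ring
      map_smul' := by
        intro c u; ext k
        show hadFun a b (c • u) k = c * hadFun a b u k
        unfold hadFun
        simp only [WithLp.ofLp_toLp]
        split_ifs <;> simp [PiLp.smul_apply, smul_eq_mul] <;> ring
      invFun := hadFun a b
      left_inv := hadFun_invol a b hab
      right_inv := hadFun_invol a b hab }
  norm_map' := by
    intro u
    rw [EuclideanSpace.norm_eq, EuclideanSpace.norm_eq]
    congr 1
    refine sum_pair_congr a b hab (fun k hka hkb => ?_) ?_
    · show ‖hadFun a b u k‖ ^ 2 = ‖u k‖ ^ 2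
      rw [hadFun_apply_other a b _ k hka hkb]
    · show ‖hadFun a b u a‖ ^ 2 + ‖hadFun a b u b‖ ^ 2 = ‖u a‖ ^ 2 + ‖u b‖ ^ 2
      rw [hadFun_apply_a, hadFun_apply_b a b hab]
      have hr : ‖(rt2 : ℂ)⁻¹‖ ^ 2 = 2⁻¹ := by
        unfold rt2
        rw [norm_inv, Complex.norm_real, Real.norm_eq_abs,
          abs_of_nonneg (Real.sqrt_nonneg 2)]
        rw [inv_pow, Real.sq_sqrt (by norm_num : (0:ℝ) ≤ 2)]
      have hpar := parallelogram_law_with_norm ℂ (u a) (u b)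
      rw [norm_mul, norm_mul, mul_pow, mul_pow, hr]
      nlinarith [sq_nonneg (‖u a + u b‖), sq_nonneg (‖u a - u b‖)]

@[simp] lemma hadU_apply (a b : Fin D) (hab : a ≠ b) (u : EuclideanSpace ℂ (Fin D)) :
    hadU a b hab u = hadFun a b u := rfl

end SecondMomentAux
namespace SecondMomentAux

variable {D : ℕ}
variable (μ : Measure (EuclideanSpace ℂ (Fin D))) [IsProbabilityMeasure μ]

lemma mono_phase
    (hinv : ∀ U : EuclideanSpace ℂ (Fin D) ≃ₗᵢ[ℂ] EuclideanSpace ℂ (Fin D), μ.map U = μ)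
    (a b c d m : Fin D) :
    ∫ u, mono a b c d u ∂μ =
      ((if a = m then Complex.I else 1) * (if b = m then -Complex.I else 1) *
       ((if c = m then Complex.I else 1) * (if d = m then -Complex.I else 1))) *
      ∫ u, mono a b c d u ∂μ := by
  conv_lhs => rw [← integral_comp μ hinv (phaseU m) (continuous_mono a b c d)]
  have hpt : ∀ u : EuclideanSpace ℂ (Fin D), mono a b c d (phaseU m u) =
      ((if a = m then Complex.I else 1) * (if b = m then -Complex.I else 1) *
       ((if c = m then Complex.I else 1) * (if d = m then -Complex.I else 1))) *
      mono a b c d u := by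
    intro u
    have h2 : Complex.I ^ 2 = -1 := Complex.I_sq
    have h3 : Complex.I ^ 3 = -Complex.I := by
      rw [show (3 : ℕ) = 2 + 1 from rfl, pow_succ, Complex.I_sq]; ring
    have h4 : Complex.I ^ 4 = 1 := Complex.I_pow_four
    simp only [mono, phaseU_apply]
    by_cases ha : a = m <;> by_cases hb : b = m <;> by_cases hc : c = m <;>
      by_cases hd : d = m <;>
      simp [ha, hb, hc, hd, Complex.conj_I] <;>
      first
        | ring1
        | (simp only [h2, h3, h4]; try ring1)
        | (ring_nf; simp only [h2, h3, h4]; try ring1)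
  simp only [hpt]
  rw [integral_const_mul]

lemma I_ne_one' : Complex.I ≠ 1 := by
  intro h
  have := congrArg Complex.re h
  simp at this

lemma eq_zero_of_eq_mul {z M : ℂ} (h : M = z * M) (hz : z ≠ 1) : M = 0 := by
  have h1 : (1 - z) * M = 0 := by linear_combination h
  rcases mul_eq_zero.mp h1 with h2 | h2
  · exact absurd (by linear_combination -h2 : z = 1) hz
  · exact h2

lemma mono_vanish
    (hinv : ∀ U : EuclideanSpace ℂ (Fin D) ≃ₗᵢ[ℂ] EuclideanSpace ℂ (Fin D), μ.map U = μ)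
    (a b c d : Fin D) (h : ¬((a = b ∧ c = d) ∨ (a = d ∧ c = b))) :
    ∫ u, mono a b c d u ∂μ = 0 := by
  by_cases hab : a = b
  · have hcd : c ≠ d := fun h' => h (Or.inl ⟨hab, h'⟩)
    have h1 := mono_phase μ hinv a b c d c
    rw [if_pos rfl, if_neg (Ne.symm hcd)] at h1
    by_cases hac : a = c
    · rw [if_pos hac, if_pos (hab ▸ hac : b = c)] at h1
      rw [show Complex.I * -Complex.I * (Complex.I * 1) = Complex.I by
        simp [Complex.I_mul_I]] at h1
      exact eq_zero_of_eq_mul h1 I_ne_one'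
    · rw [if_neg hac, if_neg (fun h' => hac (hab.trans h'))] at h1
      rw [show (1 : ℂ) * 1 * (Complex.I * 1) = Complex.I by ring] at h1
      exact eq_zero_of_eq_mul h1 I_ne_one'
  · by_cases had : a = d
    · have hcb : c ≠ b := fun h' => h (Or.inr ⟨had, h'⟩)
      have h1 := mono_phase μ hinv a b c d c
      rw [if_pos rfl, if_neg (Ne.symm hcb)] at h1
      by_cases hac : a = c
      · rw [if_pos hac, if_pos (had.symm.trans hac : d = c)] at h1
        rw [show Complex.I * 1 * (Complex.I * -Complex.I) = Complex.I by
          simp [Complex.I_mul_I]] at h1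
        exact eq_zero_of_eq_mul h1 I_ne_one'
      · rw [if_neg hac, if_neg (fun h' => hac (had.trans h'))] at h1
        rw [show (1 : ℂ) * 1 * (Complex.I * 1) = Complex.I by ring] at h1
        exact eq_zero_of_eq_mul h1 I_ne_one'
    · have h1 := mono_phase μ hinv a b c d a
      rw [if_pos rfl, if_neg (Ne.symm hab), if_neg (Ne.symm had)] at h1
      by_cases hca : c = a
      · rw [if_pos hca] at h1
        rw [show Complex.I * 1 * (Complex.I * 1) = (-1 : ℂ) by
          simp [Complex.I_mul_I]] at h1
        exact eq_zero_of_eq_mul h1 (by norm_num)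
      · rw [if_neg hca] at h1
        rw [show Complex.I * 1 * ((1 : ℂ) * 1) = Complex.I by ring] at h1
        exact eq_zero_of_eq_mul h1 I_ne_one'

lemma int_pair (a b : Fin D) :
    ∫ u, mono a b b a u ∂μ = ∫ u, mono a a b b u ∂μ := by
  have hpt : ∀ u : EuclideanSpace ℂ (Fin D), mono a b b a u = mono a a b b u :=
    fun u => by unfold mono; ring
  simp only [hpt]

lemma int_swap (a b : Fin D) :
    ∫ u, mono b b a a u ∂μ = ∫ u, mono a a b b u ∂μ := by
  have hpt : ∀ u : EuclideanSpace ℂ (Fin D), mono b b a a u = mono a a b b u :=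
    fun u => by unfold mono; ring
  simp only [hpt]

end SecondMomentAux
namespace SecondMomentAux

variable {D : ℕ}
variable (μ : Measure (EuclideanSpace ℂ (Fin D))) [IsProbabilityMeasure μ]

lemma integral_add8 {f1 f2 f3 f4 f5 f6 f7 f8 : EuclideanSpace ℂ (Fin D) → ℂ}
    (h1 : Integrable f1 μ) (h2 : Integrable f2 μ) (h3 : Integrable f3 μ)
    (h4 : Integrable f4 μ) (h5 : Integrable f5 μ) (h6 : Integrable f6 μ)
    (h7 : Integrable f7 μ) (h8 : Integrable f8 μ) :
    ∫ u, (f1 u + f2 u + f3 u + f4 u + f5 u + f6 u + f7 u + f8 u) ∂μ =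
      ∫ u, f1 u ∂μ + ∫ u, f2 u ∂μ + ∫ u, f3 u ∂μ + ∫ u, f4 u ∂μ +
      ∫ u, f5 u ∂μ + ∫ u, f6 u ∂μ + ∫ u, f7 u ∂μ + ∫ u, f8 u ∂μ := by
  rw [integral_add (f := fun u => f1 u + f2 u + f3 u + f4 u + f5 u + f6 u + f7 u)
      (g := f8) ((((((h1.add h2).add h3).add h4).add h5).add h6).add h7) h8,
    integral_add (f := fun u => f1 u + f2 u + f3 u + f4 u + f5 u + f6 u)
      (g := f7) (((((h1.add h2).add h3).add h4).add h5).add h6) h7,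
    integral_add (f := fun u => f1 u + f2 u + f3 u + f4 u + f5 u)
      (g := f6) ((((h1.add h2).add h3).add h4).add h5) h6,
    integral_add (f := fun u => f1 u + f2 u + f3 u + f4 u)
      (g := f5) (((h1.add h2).add h3).add h4) h5,
    integral_add (f := fun u => f1 u + f2 u + f3 u)
      (g := f4) ((h1.add h2).add h3) h4,
    integral_add (f := fun u => f1 u + f2 u) (g := f3) (h1.add h2) h3,
    integral_add (f := f1) (g := f2) h1 h2]

lemma expand_int (hsupp : ∀ᵐ u ∂μ, ‖u‖ = 1)
    (hinv : ∀ U : EuclideanSpace ℂ (Fin D) ≃ₗᵢ[ℂ] EuclideanSpace ℂ (Fin D), μ.map U = μ)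
    (a b : Fin D) (hab : a ≠ b) (s : ℂ) (hs : s = 1 ∨ s = -1) :
    ∫ u, ((u a + s * u b) * ((starRingEnd ℂ) (u a) + s * (starRingEnd ℂ) (u b))) *
        ((u a + s * u b) * ((starRingEnd ℂ) (u a) + s * (starRingEnd ℂ) (u b))) ∂μ =
      ∫ u, mono a a a a u ∂μ + ∫ u, mono b b b b u ∂μ +
        4 * ∫ u, mono a a b b u ∂μ := by
  have hpt : ∀ u : EuclideanSpace ℂ (Fin D),
      ((u a + s * u b) * ((starRingEnd ℂ) (u a) + s * (starRingEnd ℂ) (u b))) *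
        ((u a + s * u b) * ((starRingEnd ℂ) (u a) + s * (starRingEnd ℂ) (u b))) =
      (mono a a a a u + mono b b b b u + mono a a b b u + mono b b a a u +
        mono a b b a u + mono b a a b u + mono a b a b u + mono b a b a u) +
      s * (mono a a a b u + mono a a b a u + mono a b a a u + mono b a a a u +
        mono b b b a u + mono b b a b u + mono b a b b u + mono a b b b u) := by
    intro u
    unfold mono
    rcases hs with rfl | rfl <;> ring
  simp only [hpt]
  have I8 : ∀ p q r t : Fin D, Integrable (mono p q r t) μ := int_mono μ hsupp
  have hE : Integrable (fun u => mono a a a a u + mono b b b b u + mono a a b b u +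
      mono b b a a u + mono a b b a u + mono b a a b u + mono a b a b u +
      mono b a b a u) μ :=
    (((((((I8 a a a a).add (I8 b b b b)).add (I8 a a b b)).add (I8 b b a a)).add
      (I8 a b b a)).add (I8 b a a b)).add (I8 a b a b)).add (I8 b a b a)
  have hO : Integrable (fun u => mono a a a b u + mono a a b a u + mono a b a a u +
      mono b a a a u + mono b b b a u + mono b b a b u + mono b a b b u +
      mono a b b b u) μ :=
    (((((((I8 a a a b).add (I8 a a b a)).add (I8 a b a a)).add (I8 b a a a)).add
      (I8 b b b a)).add (I8 b b a b)).add (I8 b a b b)).add (I8 a b b b)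
  rw [integral_add hE (hO.const_mul s), integral_const_mul,
    integral_add8 μ (I8 a a a a) (I8 b b b b) (I8 a a b b) (I8 b b a a)
      (I8 a b b a) (I8 b a a b) (I8 a b a b) (I8 b a b a),
    integral_add8 μ (I8 a a a b) (I8 a a b a) (I8 a b a a) (I8 b a a a)
      (I8 b b b a) (I8 b b a b) (I8 b a b b) (I8 a b b b)]
  have hba : b ≠ a := Ne.symm hab
  rw [mono_vanish μ hinv a b a b (by tauto), mono_vanish μ hinv b a b a (by tauto),
    mono_vanish μ hinv a a a b (by tauto), mono_vanish μ hinv a a b a (by tauto),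
    mono_vanish μ hinv a b a a (by tauto), mono_vanish μ hinv b a a a (by tauto),
    mono_vanish μ hinv b b b a (by tauto), mono_vanish μ hinv b b a b (by tauto),
    mono_vanish μ hinv b a b b (by tauto), mono_vanish μ hinv a b b b (by tauto),
    int_swap μ a b, int_pair μ a b,
    show ∫ u, mono b a a b u ∂μ = ∫ u, mono a a b b u ∂μ by
      rw [int_pair μ b a, int_swap μ a b]]
  ring

lemma had_aa (hsupp : ∀ᵐ u ∂μ, ‖u‖ = 1)
    (hinv : ∀ U : EuclideanSpace ℂ (Fin D) ≃ₗᵢ[ℂ] EuclideanSpace ℂ (Fin D), μ.map U = μ)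
    (a b : Fin D) (hab : a ≠ b) :
    ∫ u, mono a a a a u ∂μ =
      4⁻¹ * (∫ u, mono a a a a u ∂μ + ∫ u, mono b b b b u ∂μ +
        4 * ∫ u, mono a a b b u ∂μ) := by
  have h := integral_comp μ hinv (hadU a b hab) (continuous_mono a a a a)
  have hpt : ∀ u : EuclideanSpace ℂ (Fin D),
      mono a a a a ((hadU a b hab) u) =
      4⁻¹ * (((u a + 1 * u b) * ((starRingEnd ℂ) (u a) + 1 * (starRingEnd ℂ) (u b))) *
        ((u a + 1 * u b) * ((starRingEnd ℂ) (u a) + 1 * (starRingEnd ℂ) (u b)))) := by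
    intro u
    simp only [hadU_apply, mono, hadFun_apply_a, _root_.map_mul, _root_.map_add,
      conj_rt2_inv]
    linear_combination (rt2⁻¹ * rt2⁻¹ + 2⁻¹) *
      (((u a + u b) * ((starRingEnd ℂ) (u a) + (starRingEnd ℂ) (u b))) ^ 2) * rt2_inv_sq
  conv_lhs => rw [← h]
  simp only [hpt]
  rw [integral_const_mul, expand_int μ hsupp hinv a b hab 1 (Or.inl rfl)]

lemma had_bb (hsupp : ∀ᵐ u ∂μ, ‖u‖ = 1)
    (hinv : ∀ U : EuclideanSpace ℂ (Fin D) ≃ₗᵢ[ℂ] EuclideanSpace ℂ (Fin D), μ.map U = μ)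
    (a b : Fin D) (hab : a ≠ b) :
    ∫ u, mono b b b b u ∂μ =
      4⁻¹ * (∫ u, mono a a a a u ∂μ + ∫ u, mono b b b b u ∂μ +
        4 * ∫ u, mono a a b b u ∂μ) := by
  have h := integral_comp μ hinv (hadU a b hab) (continuous_mono b b b b)
  have hpt : ∀ u : EuclideanSpace ℂ (Fin D),
      mono b b b b ((hadU a b hab) u) =
      4⁻¹ * (((u a + -1 * u b) * ((starRingEnd ℂ) (u a) + -1 * (starRingEnd ℂ) (u b))) *
        ((u a + -1 * u b) * ((starRingEnd ℂ) (u a) + -1 * (starRingEnd ℂ) (u b)))) := by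
    intro u
    simp only [hadU_apply, mono, hadFun_apply_b a b hab, _root_.map_mul, _root_.map_sub,
      conj_rt2_inv]
    linear_combination (rt2⁻¹ * rt2⁻¹ + 2⁻¹) *
      (((u a - u b) * ((starRingEnd ℂ) (u a) - (starRingEnd ℂ) (u b))) ^ 2) * rt2_inv_sq
  conv_lhs => rw [← h]
  simp only [hpt]
  rw [integral_const_mul, expand_int μ hsupp hinv a b hab (-1) (Or.inr rfl)]

lemma diag_eq (hsupp : ∀ᵐ u ∂μ, ‖u‖ = 1)
    (hinv : ∀ U : EuclideanSpace ℂ (Fin D) ≃ₗᵢ[ℂ] EuclideanSpace ℂ (Fin D), μ.map U = μ)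
    (a b : Fin D) :
    ∫ u, mono a a a a u ∂μ = ∫ u, mono b b b b u ∂μ := by
  by_cases hab : a = b
  · rw [hab]
  · linear_combination (had_aa μ hsupp hinv a b hab) - (had_bb μ hsupp hinv a b hab)

lemma off_diag (hsupp : ∀ᵐ u ∂μ, ‖u‖ = 1)
    (hinv : ∀ U : EuclideanSpace ℂ (Fin D) ≃ₗᵢ[ℂ] EuclideanSpace ℂ (Fin D), μ.map U = μ)
    (a b : Fin D) (hab : a ≠ b) :
    ∫ u, mono a a a a u ∂μ = 2 * ∫ u, mono a a b b u ∂μ := by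
  linear_combination (3/2 : ℂ) * (had_aa μ hsupp hinv a b hab) +
    (1/2 : ℂ) * (had_bb μ hsupp hinv a b hab)

end SecondMomentAux
namespace SecondMomentAux

variable {D : ℕ}
variable (μ : Measure (EuclideanSpace ℂ (Fin D))) [IsProbabilityMeasure μ]

lemma norm_sum (hsupp : ∀ᵐ u ∂μ, ‖u‖ = 1) :
    ∑ a : Fin D, ∑ b : Fin D, ∫ u, mono a a b b u ∂μ = 1 := by
  have h1 : ∀ a : Fin D, ∑ b : Fin D, ∫ u, mono a a b b u ∂μ =
      ∫ u, ∑ b : Fin D, mono a a b b u ∂μ :=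
    fun a => (integral_finset_sum _ (fun b _ => int_mono μ hsupp a a b b)).symm
  simp only [h1]
  rw [← integral_finset_sum _
    (fun a _ => integrable_finset_sum _ (fun b _ => int_mono μ hsupp a a b b))]
  have h2 : ∀ᵐ u ∂μ, (∑ a : Fin D, ∑ b : Fin D, mono a a b b u) = 1 := by
    filter_upwards [hsupp] with u hu
    have hn : (∑ a : Fin D, u a * (starRingEnd ℂ) (u a)) = 1 := by
      have hs : ∑ a : Fin D, ‖u a‖ ^ 2 = 1 := by
        have := EuclideanSpace.norm_eq u
        rw [hu] at this
        have h3 := this.symm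
        rwa [Real.sqrt_eq_one] at h3
      calc ∑ a : Fin D, u a * (starRingEnd ℂ) (u a)
          = ∑ a : Fin D, ((‖u a‖ ^ 2 : ℝ) : ℂ) := by
            refine Finset.sum_congr rfl fun a _ => ?_
            rw [Complex.mul_conj, Complex.normSq_eq_norm_sq]
        _ = ((∑ a : Fin D, ‖u a‖ ^ 2 : ℝ) : ℂ) := by push_cast; ring
        _ = 1 := by rw [hs]; norm_num
    have hprod : (∑ a : Fin D, ∑ b : Fin D, mono a a b b u) =
        (∑ a : Fin D, u a * (starRingEnd ℂ) (u a)) *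
        (∑ b : Fin D, u b * (starRingEnd ℂ) (u b)) := by
      rw [Finset.sum_mul_sum]
      rfl
    rw [hprod, hn, one_mul]
  rw [integral_congr_ae h2]
  simp

lemma key_diag (hsupp : ∀ᵐ u ∂μ, ‖u‖ = 1)
    (hinv : ∀ U : EuclideanSpace ℂ (Fin D) ≃ₗᵢ[ℂ] EuclideanSpace ℂ (Fin D), μ.map U = μ)
    (i : Fin D) :
    ((D : ℂ) * ((D : ℂ) + 1)) * ∫ u, mono i i i i u ∂μ = 2 := by
  have hD1 : 1 ≤ D := i.pos
  set d : ℂ := ∫ u, mono i i i i u ∂μ with hd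
  have hoff : ∀ a b : Fin D, a ≠ b → ∫ u, mono a a b b u ∂μ = d / 2 := by
    intro a b hab
    have h1 := off_diag μ hsupp hinv a b hab
    have h2 := diag_eq μ hsupp hinv a i
    rw [← hd] at h2
    rw [h2] at h1
    linear_combination -(1/2 : ℂ) * h1
  have hstep : ∀ a : Fin D, ∑ b : Fin D, ∫ u, mono a a b b u ∂μ =
      d + ((D : ℂ) - 1) * (d / 2) := by
    intro a
    rw [← Finset.add_sum_erase _ _ (Finset.mem_univ a)]
    have hdig : ∫ u, mono a a a a u ∂μ = d := by
      rw [hd]; exact diag_eq μ hsupp hinv a i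
    rw [hdig]
    have hrest : ∑ b ∈ Finset.univ.erase a, ∫ u, mono a a b b u ∂μ =
        ((D : ℂ) - 1) * (d / 2) := by
      rw [Finset.sum_congr rfl (fun b hb => hoff a b (Ne.symm (Finset.ne_of_mem_erase hb)))]
      rw [Finset.sum_const, Finset.card_erase_of_mem (Finset.mem_univ a),
        Finset.card_univ, Fintype.card_fin]
      rw [nsmul_eq_mul, Nat.cast_sub hD1]
      push_cast
      ring
    rw [hrest]
  have hsum := norm_sum μ hsupp
  rw [Finset.sum_congr rfl (fun a _ => hstep a), Finset.sum_const,
    Finset.card_univ, Fintype.card_fin, nsmul_eq_mul] at hsum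
  linear_combination 2 * hsum

lemma key_off (hsupp : ∀ᵐ u ∂μ, ‖u‖ = 1)
    (hinv : ∀ U : EuclideanSpace ℂ (Fin D) ≃ₗᵢ[ℂ] EuclideanSpace ℂ (Fin D), μ.map U = μ)
    (a b : Fin D) (hab : a ≠ b) :
    ((D : ℂ) * ((D : ℂ) + 1)) * ∫ u, mono a a b b u ∂μ = 1 := by
  have h1 := key_diag μ hsupp hinv a
  have h2 := off_diag μ hsupp hinv a b hab
  linear_combination (1/2 : ℂ) * h1 - ((D : ℂ) * ((D : ℂ) + 1) / 2) * h2

end SecondMomentAux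

namespace SecondMomentAux

lemma expval_eq {D : ℕ} (A : Matrix (Fin D) (Fin D) ℂ) (u : EuclideanSpace ℂ (Fin D)) :
    expval A u = ∑ k : Fin D, ∑ l : Fin D, A k l * (u l * (starRingEnd ℂ) (u k)) := by
  have h : expval A u = ∑ k : Fin D, (starRingEnd ℂ) (u k) * (∑ l : Fin D, A k l * u l) := by
    unfold expval
    rw [Matrix.toEuclideanLin_apply, PiLp.inner_apply]
    refine Finset.sum_congr rfl fun k _ => ?_
    rw [RCLike.inner_apply, mul_comm]
    congr 1
  rw [h]
  refine Finset.sum_congr rfl fun k _ => ?_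
  rw [Finset.mul_sum]
  refine Finset.sum_congr rfl fun l _ => ?_
  ring

end SecondMomentAux


open SecondMomentAux

/-- (operator form of the second-moment identity), stated entrywise:
for the rotation-invariant (uniform) probability measure `μ` on the unit sphere of `ℂ^D`
and a Hermitian matrix `A`,
`D(D+1) ∫ ⟨u,Au⟩ · (u u*) dμ(u) = A + tr(A)·I`,
where `(u u*) i j = u i · conj (u j)`. -/
theorem second_moment_operator_identity (D : ℕ) (hD : 1 ≤ D)
    (μ : Measure (EuclideanSpace ℂ (Fin D))) [IsProbabilityMeasure μ]
    (hsupp : ∀ᵐ u ∂μ, ‖u‖ = 1)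
    (hinv : ∀ U : EuclideanSpace ℂ (Fin D) ≃ₗᵢ[ℂ] EuclideanSpace ℂ (Fin D),
      μ.map U = μ)
    (A : Matrix (Fin D) (Fin D) ℂ) (hA : A.IsHermitian) :
    ∀ i j : Fin D,
      ((D : ℂ) * ((D : ℂ) + 1)) * ∫ u, expval A u * (u i * (starRingEnd ℂ) (u j)) ∂μ
        = (A + A.trace • (1 : Matrix (Fin D) (Fin D) ℂ)) i j := by
  intro i j
  have hpt : ∀ u : EuclideanSpace ℂ (Fin D),
      expval A u * (u i * (starRingEnd ℂ) (u j)) =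
      ∑ k : Fin D, ∑ l : Fin D, A k l * mono l k i j u := by
    intro u
    rw [expval_eq A u, Finset.sum_mul]
    refine Finset.sum_congr rfl fun k _ => ?_
    rw [Finset.sum_mul]
    refine Finset.sum_congr rfl fun l _ => ?_
    unfold mono
    ring
  simp only [hpt]
  rw [integral_finset_sum _ (fun k _ => integrable_finset_sum _ (fun l _ =>
    ((int_mono μ hsupp l k i j).const_mul (A k l))))]
  have hswap : ∀ k : Fin D, ∫ u, ∑ l : Fin D, A k l * mono l k i j u ∂μ =
      ∑ l : Fin D, A k l * ∫ u, mono l k i j u ∂μ := by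
    intro k
    rw [integral_finset_sum _ (fun l _ => (int_mono μ hsupp l k i j).const_mul (A k l))]
    exact Finset.sum_congr rfl fun l _ => integral_const_mul _ _
  simp only [hswap]
  by_cases hij : i = j
  · subst hij
    have hin : ∀ k : Fin D, ∑ l : Fin D, A k l * ∫ u, mono l k i i u ∂μ =
        A k k * ∫ u, mono k k i i u ∂μ := by
      intro k
      refine Finset.sum_eq_single_of_mem k (Finset.mem_univ k) (fun l _ hlk => ?_)
      rw [mono_vanish μ hinv l k i i (by
        rintro (⟨h1, _⟩ | ⟨h1, h2⟩)
        · exact hlk h1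
        · exact hlk (h1.trans h2)), mul_zero]
    simp only [hin]
    have hrhs : (A + A.trace • (1 : Matrix (Fin D) (Fin D) ℂ)) i i = A i i + A.trace := by
      simp [Matrix.add_apply, Matrix.smul_apply, Matrix.one_apply_eq, smul_eq_mul]
    rw [hrhs, Finset.mul_sum]
    have hterm : ∀ k : Fin D,
        ((D : ℂ) * ((D : ℂ) + 1)) * (A k k * ∫ u, mono k k i i u ∂μ) =
        A k k + (if k = i then A k k else 0) := by
      intro k
      by_cases hki : k = i
      · subst hki
        have hkey := key_diag μ hsupp hinv k
        simp only [eq_self_iff_true, if_true]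
        linear_combination A k k * hkey
      · have hkey := key_off μ hsupp hinv k i hki
        simp only [if_neg hki]
        linear_combination A k k * hkey
    rw [Finset.sum_congr rfl (fun k _ => hterm k), Finset.sum_add_distrib,
      Finset.sum_ite_eq' Finset.univ i (fun k => A k k)]
    simp only [Finset.mem_univ, if_pos]
    simp [Matrix.trace, Matrix.diag]
    ring
  · have hout : ∑ k : Fin D, ∑ l : Fin D, A k l * ∫ u, mono l k i j u ∂μ =
        A i j * ∫ u, mono j i i j u ∂μ := by
      rw [Finset.sum_eq_single_of_mem i (Finset.mem_univ i) (fun k _ hki =>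
        Finset.sum_eq_zero fun l _ => by
          rw [mono_vanish μ hinv l k i j (by
            rintro (⟨_, h2⟩ | ⟨_, h2⟩)
            · exact hij h2
            · exact hki h2.symm), mul_zero])]
      exact Finset.sum_eq_single_of_mem j (Finset.mem_univ j) (fun l _ hlj => by
        rw [mono_vanish μ hinv l i i j (by
          rintro (⟨_, h2⟩ | ⟨h1, _⟩)
          · exact hij h2
          · exact hlj h1), mul_zero])
    rw [hout]
    have hpair : ∫ u, mono j i i j u ∂μ = ∫ u, mono i i j j u ∂μ := by
      rw [int_pair μ j i, int_swap μ i j]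
    rw [hpair]
    have hrhs : (A + A.trace • (1 : Matrix (Fin D) (Fin D) ℂ)) i j = A i j := by
      simp [Matrix.add_apply, Matrix.smul_apply, Matrix.one_apply_ne hij]
    rw [hrhs]
    have hkey := key_off μ hsupp hinv i j hij
    linear_combination A i j * hkey
end

section
/- Let X_1, X_2, … be i.i.d. real-valued random variables with mean m and variance σ². Fix ε > 0 and an integer K ≥ 1, and group the first N = K·B samples into K disjoint batches of size B each, where B ≥ 34·σ²/ε². Let μ̂_k denote the empirical mean of the k-th batch, k = 1, …, K. Then the probability that at least K/2 of the batch means satisfy |μ̂_k − m| > ε is at most 2·e^{−K/2}. In particular, any median μ̂(N,K) of μ̂_1, …, μ̂_K satisfies Pr[|μ̂(N,K) − m| > ε] ≤ 2·e^{−K/2}. -/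
open MeasureTheory ProbabilityTheory

set_option maxHeartbeats 1000000 in
/-- median-of-means estimation, Theorem 3 of the paper:
given i.i.d. real random variables `X 0, X 1, …` with mean `m` and variance `σ²`,
`K ≥ 1` batches of size `B ≥ 34 σ²/ε²` each, and batch means
`μ̂ k = (Σ_{j<B} X (k·B+j)) / B`, the probability that at least `K/2` of the batch means
deviate from `m` by more than `ε` is at most `2 e^{−K/2}`; in particular any median of the
batch means deviates from `m` by more than `ε` with probability at most `2 e^{−K/2}`. -/
theorem median_of_means {Ω : Type*} [MeasurableSpace Ω]
    (P : Measure Ω) [IsProbabilityMeasure P]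
    (X : ℕ → Ω → ℝ) (hmeas : ∀ i, Measurable (X i))
    (hindep : iIndepFun X P)
    (hident : ∀ i, IdentDistrib (X i) (X 0) P P)
    (m σ : ℝ)
    (hL2 : ∀ i, MemLp (X i) 2 P)
    (hmean : ∀ i, ∫ ω, X i ω ∂P = m)
    (hvar : ∀ i, variance (X i) P = σ ^ 2)
    (ε : ℝ) (hε : 0 < ε) (K B : ℕ) (hK : 1 ≤ K) (hB1 : 1 ≤ B)
    (hB : 34 * σ ^ 2 / ε ^ 2 ≤ (B : ℝ))
    (μhat : ℕ → Ω → ℝ)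
    (hμhat : ∀ k ω, μhat k ω = (∑ j ∈ Finset.range B, X (k * B + j) ω) / B) :
    P {ω | (K : ℝ) / 2 ≤
        (((Finset.range K).filter fun k => ε < |μhat k ω - m|).card : ℝ)}
      ≤ ENNReal.ofReal (2 * Real.exp (-(K : ℝ) / 2)) ∧
    ∀ med : Ω → ℝ,
      (∀ ω, (K + 1) / 2 ≤ ((Finset.range K).filter fun k => μhat k ω ≤ med ω).card ∧
            (K + 1) / 2 ≤ ((Finset.range K).filter fun k => med ω ≤ μhat k ω).card) →
      P {ω | ε < |med ω - m|} ≤ ENNReal.ofReal (2 * Real.exp (-(K : ℝ) / 2)) := by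
  classical
  set A : ℕ → Set Ω := fun k => {ω | ε < |μhat k ω - m|} with hA
  have hBpos : (0:ℝ) < B := by exact_mod_cast hB1
  have hμfun : ∀ k, μhat k = fun ω => (∑ j ∈ Finset.range B, X (k * B + j) ω) / B :=
    fun k => funext (hμhat k)
  -- L2 membership of batch means
  have hμL2 : ∀ k, MemLp (μhat k) 2 P := by
    intro k
    rw [hμfun k]
    have h1 : MemLp (∑ j ∈ Finset.range B, X (k * B + j)) 2 P :=
      memLp_finset_sum' (Finset.range B) (fun j (_ : j ∈ Finset.range B) => hL2 (k*B+j))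
    have h2 := h1.const_mul ((B:ℝ)⁻¹)
    convert h2 using 1
    funext ω
    simp [div_eq_inv_mul, Finset.sum_apply]
  -- mean of batch means
  have hμmean : ∀ k, ∫ ω, μhat k ω ∂P = m := by
    intro k
    rw [hμfun k]
    rw [integral_div, integral_finset_sum _ fun j _ => (hL2 _).integrable one_le_two]
    simp only [hmean, Finset.sum_const, Finset.card_range, nsmul_eq_mul]
    field_simp
  -- variance of batch means
  have hμvar : ∀ k, variance (μhat k) P = σ ^ 2 / B := by
    intro k
    have h1 : μhat k = fun ω => (B:ℝ)⁻¹ * ((∑ j ∈ Finset.range B, X (k*B+j)) ω) := by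
      rw [hμfun k]; funext ω; simp [div_eq_inv_mul]
    rw [h1, variance_const_mul]
    rw [IndepFun.variance_sum (fun j _ => hL2 _)
      (fun i _ j _ hij => hindep.indepFun (by simp; omega))]
    simp only [hvar, Finset.sum_const, Finset.card_range, nsmul_eq_mul]
    field_simp
  -- Chebyshev bound on each batch
  have hcheb : ∀ k, P (A k) ≤ ENNReal.ofReal (34⁻¹ : ℝ) := by
    intro k
    have h1 : P (A k) ≤ ENNReal.ofReal (variance (μhat k) P / ε ^ 2) := by
      refine le_trans (measure_mono ?_) (meas_ge_le_variance_div_sq (hμL2 k) hε)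
      intro ω hω
      simp only [hA, Set.mem_setOf_eq] at hω ⊢
      rw [hμmean k]
      exact hω.le
    refine h1.trans (ENNReal.ofReal_le_ofReal ?_)
    rw [hμvar k, div_div]
    rw [div_le_iff₀ (by positivity)]
    rw [div_le_iff₀ (by positivity)] at hB
    nlinarith [sq_nonneg σ, sq_nonneg ε]
  -- batches
  set batch : ℕ → Finset ℕ := fun k => Finset.Ico (k*B) (k*B + B) with hbatch
  have hbdisj : ∀ {k l : ℕ}, k ≠ l → Disjoint (batch k) (batch l) := by
    have key : ∀ {k l : ℕ}, k < l → Disjoint (batch k) (batch l) := by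
      intro k l hkl
      rw [Finset.disjoint_left]
      intro i hi hi'
      simp only [hbatch, Finset.mem_Ico] at hi hi'
      have : (k+1)*B ≤ l*B := Nat.mul_le_mul_right _ (by omega)
      rw [add_one_mul] at this
      omega
    intro k l hkl
    rcases lt_or_gt_of_ne hkl with h | h
    · exact key h
    · exact (key h).symm
  -- each batch event as a preimage of the tuple map
  have hApre : ∀ (T : Finset ℕ) (k : ℕ), batch k ⊆ T →
      ∃ U : Set ((i : T) → ℝ), MeasurableSet U ∧ (fun a (i : T) => X i a) ⁻¹' U = A k := by
    intro T k hsub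
    have hmem : ∀ j ∈ Finset.range B, k*B + j ∈ T := by
      intro j hj
      refine hsub ?_
      simp only [hbatch, Finset.mem_Ico]
      simp only [Finset.mem_range] at hj
      omega
    refine ⟨{v | ε < |(∑ j ∈ (Finset.range B).attach, v ⟨k*B + j.1, hmem j.1 j.2⟩) / B - m|},
      ?_, ?_⟩
    · have h1 : Measurable fun v : (i : T) → ℝ =>
          ∑ j ∈ (Finset.range B).attach, v ⟨k*B + j.1, hmem j.1 j.2⟩ := by
        apply Finset.measurable_sum
        intro j _
        exact measurable_pi_apply _
      exact measurableSet_lt measurable_const (((h1.div_const _).sub_const _).abs)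
    · ext ω
      simp only [Set.mem_preimage, Set.mem_setOf_eq, hA]
      rw [Finset.sum_attach (Finset.range B) (fun i => X (k*B + i) ω), hμhat]
  -- independence: product formula over any finset of batches
  have hprod : ∀ S : Finset ℕ, P (⋂ k ∈ S, A k) = ∏ k ∈ S, P (A k) := by
    intro S
    induction S using Finset.induction_on with
    | empty => simp
    | @insert k S hk ih =>
      have hdisj : Disjoint (batch k) (S.biUnion batch) := by
        rw [Finset.disjoint_biUnion_right]
        exact fun l hl => hbdisj (fun h => hk (h ▸ hl))
      have hIF := hindep.indepFun_finset (batch k) (S.biUnion batch) hdisj hmeas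
      obtain ⟨U, hU, hUeq⟩ := hApre (batch k) k (subset_refl _)
      choose V hV hVeq using fun (l : S) =>
        hApre (S.biUnion batch) l.1 (fun i hi => Finset.mem_biUnion.2 ⟨l.1, l.2, hi⟩)
      have hset : (⋂ l ∈ S, A l) = (fun a (i : S.biUnion batch) => X i a) ⁻¹' (⋂ l : S, V l) := by
        rw [Set.preimage_iInter]
        ext ω
        simp only [Set.mem_iInter]
        exact ⟨fun h l => (Set.ext_iff.1 (hVeq l) ω).2 (h l.1 l.2),
               fun h l hl => (Set.ext_iff.1 (hVeq ⟨l, hl⟩) ω).1 (h ⟨l, hl⟩)⟩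
      have hmul := hIF.measure_inter_preimage_eq_mul U (⋂ l : S, V l) hU
        (MeasurableSet.iInter fun l => hV l)
      rw [Finset.set_biInter_insert, ← hUeq, hset, hmul, Finset.prod_insert hk, ← ih,
        hUeq, ← hset]
  -- the main bound
  have hc2 : ∀ n : ℕ, (K:ℝ)/2 ≤ n → (K+1)/2 ≤ n := by
    intro n h
    have : (K:ℝ) ≤ 2*n := by linarith
    have : K ≤ 2*n := by exact_mod_cast this
    omega
  set c : ℕ := (K+1)/2 with hc
  have hmain : P {ω | (K : ℝ) / 2 ≤
      (((Finset.range K).filter fun k => ε < |μhat k ω - m|).card : ℝ)}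
      ≤ ENNReal.ofReal (2 * Real.exp (-(K : ℝ) / 2)) := by
    have hsubU : {ω | (K : ℝ) / 2 ≤
        (((Finset.range K).filter fun k => ε < |μhat k ω - m|).card : ℝ)}
        ⊆ ⋃ S ∈ (Finset.range K).powersetCard c, ⋂ k ∈ S, A k := by
      intro ω hω
      simp only [Set.mem_setOf_eq] at hω
      have h1 : c ≤ ((Finset.range K).filter fun k => ε < |μhat k ω - m|).card :=
        hc2 _ hω
      obtain ⟨S, hS, hcard⟩ := Finset.exists_subset_card_eq h1
      refine Set.mem_iUnion₂.2 ⟨S, Finset.mem_powersetCard.2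
          ⟨hS.trans (Finset.filter_subset _ _), hcard⟩, ?_⟩
      refine Set.mem_iInter₂.2 fun k hk => ?_
      have := hS hk
      simp only [Finset.mem_filter] at this
      exact this.2
    refine le_trans (measure_mono hsubU) ?_
    refine le_trans (measure_biUnion_finset_le _ _) ?_
    have hsum : ∑ S ∈ (Finset.range K).powersetCard c, P (⋂ k ∈ S, A k)
        ≤ ∑ S ∈ (Finset.range K).powersetCard c, ENNReal.ofReal ((34⁻¹ : ℝ)^c) := by
      refine Finset.sum_le_sum fun S hS => ?_
      rw [hprod S]
      have hcard : S.card = c := (Finset.mem_powersetCard.1 hS).2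
      calc ∏ k ∈ S, P (A k) ≤ ∏ k ∈ S, ENNReal.ofReal (34⁻¹ : ℝ) :=
            Finset.prod_le_prod' fun k _ => hcheb k
        _ = (ENNReal.ofReal (34⁻¹ : ℝ))^c := by rw [Finset.prod_const, hcard]
        _ = ENNReal.ofReal ((34⁻¹ : ℝ)^c) := (ENNReal.ofReal_pow (by norm_num) c).symm
    refine le_trans hsum ?_
    rw [Finset.sum_const, Finset.card_powersetCard, Finset.card_range, nsmul_eq_mul]
    rw [← ENNReal.ofReal_natCast (K.choose c), ← ENNReal.ofReal_mul (by positivity)]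
    refine ENNReal.ofReal_le_ofReal ?_
    -- real-number estimate
    have hchoose : (K.choose c : ℝ) ≤ 2^K := by
      have h1 : K.choose c ≤ 2^K := by
        calc K.choose c ≤ ∑ i ∈ Finset.range (K+1), K.choose i :=
              Finset.single_le_sum (fun i _ => Nat.zero_le _)
                (Finset.mem_range.2 (by omega))
          _ = 2^K := Nat.sum_range_choose K
      exact_mod_cast h1
    have hcK : (K:ℝ)/2 ≤ (c:ℝ) := by
      have : K ≤ 2*c := by omega
      have : (K:ℝ) ≤ 2*c := by exact_mod_cast this
      linarith
    have hpow : ((34:ℝ)⁻¹)^c ≤ ((34:ℝ)⁻¹)^((K:ℝ)/2) := by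
      rw [← Real.rpow_natCast (34⁻¹ : ℝ) c]
      exact Real.rpow_le_rpow_of_exponent_ge (by norm_num) (by norm_num) hcK
    have h2K : (2:ℝ)^K = (4:ℝ)^((K:ℝ)/2) := by
      rw [← Real.rpow_natCast 2 K]
      rw [show (4:ℝ) = (2:ℝ)^(2:ℝ) by norm_num [Real.rpow_natCast]]
      rw [← Real.rpow_mul (by norm_num)]
      congr 1
      ring
    have hkey : (2:ℝ)^K * ((34:ℝ)⁻¹)^((K:ℝ)/2) ≤ Real.exp (-(K:ℝ)/2) := by
      rw [h2K, ← Real.mul_rpow (by norm_num) (by norm_num)]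
      have h417 : (4:ℝ) * 34⁻¹ ≤ Real.exp (-1) := by
        rw [Real.exp_neg]
        have h1 : (0:ℝ) < Real.exp 1 := Real.exp_pos 1
        have h2 : Real.exp 1 < 2.7182818286 := Real.exp_one_lt_d9
        have h3 : Real.exp 1 * (Real.exp 1)⁻¹ = 1 := mul_inv_cancel₀ (ne_of_gt h1)
        nlinarith [inv_pos.2 h1]
      calc ((4:ℝ) * 34⁻¹)^((K:ℝ)/2) ≤ (Real.exp (-1))^((K:ℝ)/2) :=
            Real.rpow_le_rpow (by norm_num) h417 (by positivity)
        _ = Real.exp (-(K:ℝ)/2) := by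
            rw [Real.rpow_def_of_pos (Real.exp_pos _), Real.log_exp]
            ring_nf
    have hexp : (0:ℝ) < Real.exp (-(K:ℝ)/2) := Real.exp_pos _
    calc (K.choose c : ℝ) * (34⁻¹:ℝ)^c ≤ (2:ℝ)^K * (34⁻¹:ℝ)^c := by
          refine mul_le_mul_of_nonneg_right hchoose (by positivity)
      _ ≤ (2:ℝ)^K * ((34:ℝ)⁻¹)^((K:ℝ)/2) := by
          refine mul_le_mul_of_nonneg_left hpow (by positivity)
      _ ≤ Real.exp (-(K:ℝ)/2) := hkey
      _ ≤ 2 * Real.exp (-(K:ℝ)/2) := by linarith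
  refine ⟨hmain, ?_⟩
  -- median part
  intro med hmed
  refine le_trans (measure_mono ?_) hmain
  intro ω hω
  simp only [Set.mem_setOf_eq] at hω ⊢
  rcases lt_abs.1 hω with h | h
  · -- med ω - m > ε : batch means ≥ med are all far
    have hsub : (Finset.range K).filter (fun k => med ω ≤ μhat k ω)
        ⊆ (Finset.range K).filter fun k => ε < |μhat k ω - m| := by
      intro k hk
      simp only [Finset.mem_filter] at hk ⊢
      refine ⟨hk.1, lt_of_lt_of_le ?_ (le_abs_self _)⟩
      linarith [hk.2]
    have h1 := (hmed ω).2
    have h2 : (K+1)/2 ≤ ((Finset.range K).filter fun k => ε < |μhat k ω - m|).card :=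
      le_trans h1 (Finset.card_le_card hsub)
    have h3 : K ≤ 2 * ((Finset.range K).filter fun k => ε < |μhat k ω - m|).card := by omega
    have := (Nat.cast_le (α := ℝ)).2 h3
    push_cast at this
    linarith
  · -- med ω < m - ε
    have hsub : (Finset.range K).filter (fun k => μhat k ω ≤ med ω)
        ⊆ (Finset.range K).filter fun k => ε < |μhat k ω - m| := by
      intro k hk
      simp only [Finset.mem_filter] at hk ⊢
      refine ⟨hk.1, lt_of_lt_of_le ?_ (neg_le_abs _)⟩
      linarith [hk.2]
    have h1 := (hmed ω).1
    have h2 : (K+1)/2 ≤ ((Finset.range K).filter fun k => ε < |μhat k ω - m|).card :=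
      le_trans h1 (Finset.card_le_card hsub)
    have h3 : K ≤ 2 * ((Finset.range K).filter fun k => ε < |μhat k ω - m|).card := by omega
    have := (Nat.cast_le (α := ℝ)).2 h3
    push_cast at this
    linarith
end

section
/- Let D ≥ 1, let P be a rank-r orthogonal projection on ℂ^D with 1 ≤ r ≤ D, let α ∈ [0,1], and set ρ = (1−α)·I/D + α·P/r. Let μ be the rotation-invariant probability measure on the unit sphere of ℂ^D and define p(u) = D·⟨u, ρ u⟩. Then the variance satisfies ∫ p(u)² dμ(u) − (∫ p(u) dμ(u))² ≤ α²/r. -/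
open MeasureTheory Matrix

namespace BornVar
open ComplexConjugate
variable {D : ℕ}

noncomputable def mono4 (i j k l : Fin D) (u : EuclideanSpace ℂ (Fin D)) : ℂ :=
  conj (u i) * u j * (conj (u k) * u l)

noncomputable def mono2 (i j : Fin D) (u : EuclideanSpace ℂ (Fin D)) : ℂ :=
  conj (u i) * u j

lemma mono2_mul_mono2 (i j k l : Fin D) (u : EuclideanSpace ℂ (Fin D)) :
    mono2 i j u * mono2 k l u = mono4 i j k l u := rfl

lemma cont_coord (i : Fin D) : Continuous fun u : EuclideanSpace ℂ (Fin D) => u i :=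
  (EuclideanSpace.proj (𝕜 := ℂ) i).continuous

lemma cont_mono4 (i j k l : Fin D) : Continuous (mono4 i j k l) :=
  (((Complex.continuous_conj.comp (cont_coord i)).mul (cont_coord j)).mul
    ((Complex.continuous_conj.comp (cont_coord k)).mul (cont_coord l)))

lemma cont_mono2 (i j : Fin D) : Continuous (mono2 i j) :=
  (Complex.continuous_conj.comp (cont_coord i)).mul (cont_coord j)

lemma norm_coord_le (u : EuclideanSpace ℂ (Fin D)) (i : Fin D) : ‖u i‖ ≤ ‖u‖ := by
  rw [EuclideanSpace.norm_eq]
  calc ‖u i‖ = Real.sqrt (‖u i‖ ^ 2) := by rw [Real.sqrt_sq (norm_nonneg _)]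
  _ ≤ _ := by
      apply Real.sqrt_le_sqrt
      exact Finset.single_le_sum (f := fun j => ‖u j‖ ^ 2)
        (fun j _ => by positivity) (Finset.mem_univ i)

lemma eq_zero_of_self_eq_mul {z w : ℂ} (h : z = w * z) (hw : w ≠ 1) : z = 0 := by
  have h2 : (1 - w) * z = 0 := by linear_combination h
  rcases mul_eq_zero.1 h2 with h3 | h3
  · exact absurd (by linear_combination -h3) hw
  · exact h3

/-- phase unitary: multiply coordinate `m` by a unit scalar `c`. -/
noncomputable def phaseU (m : Fin D) (c : ℂ) (hc : ‖c‖ = 1) :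
    EuclideanSpace ℂ (Fin D) ≃ₗᵢ[ℂ] EuclideanSpace ℂ (Fin D) := by
  have hc0 : c ≠ 0 := by intro h; rw [h] at hc; simp at hc
  have hcc : conj c * c = 1 := by rw [RCLike.conj_mul, hc]; norm_num
  refine LinearEquiv.isometryOfInner
    { toFun := fun u => WithLp.toLp 2 fun n => (if n = m then c else 1) * u n
      invFun := fun u => WithLp.toLp 2 fun n => (if n = m then c else 1)⁻¹ * u n
      map_add' := by
        intro x y; ext n; simp only [PiLp.add_apply, PiLp.toLp_apply]; split_ifs <;> ring
      map_smul' := by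
        intro a x; ext n
        simp only [PiLp.smul_apply, PiLp.toLp_apply, smul_eq_mul, RingHom.id_apply]
        split_ifs <;> ring
      left_inv := by
        intro x; ext n
        simp only [PiLp.toLp_apply]
        split_ifs <;> field_simp
      right_inv := by
        intro x; ext n
        simp only [PiLp.toLp_apply]
        split_ifs <;> field_simp } ?_
  intro x y
  simp only [PiLp.inner_apply, RCLike.inner_apply', LinearEquiv.coe_mk, LinearMap.coe_mk,
    AddHom.coe_mk, PiLp.toLp_apply]
  refine Finset.sum_congr rfl fun n _ => ?_
  simp only [_root_.map_mul (starRingEnd ℂ)]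
  split_ifs with h
  · calc conj c * conj (x n) * (c * y n) = (conj c * c) * (conj (x n) * y n) := by ring
    _ = conj (x n) * y n := by rw [hcc, one_mul]
  · simp

@[simp] lemma phaseU_apply (m : Fin D) (c : ℂ) (hc : ‖c‖ = 1) (u : EuclideanSpace ℂ (Fin D))
    (n : Fin D) : phaseU m c hc u n = (if n = m then c else 1) * u n := rfl

/-- permutation unitary -/
noncomputable def permU (σ : Equiv.Perm (Fin D)) :
    EuclideanSpace ℂ (Fin D) ≃ₗᵢ[ℂ] EuclideanSpace ℂ (Fin D) := by
  refine LinearEquiv.isometryOfInner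
    { toFun := fun u => WithLp.toLp 2 fun n => u (σ n)
      invFun := fun u => WithLp.toLp 2 fun n => u (σ.symm n)
      map_add' := by intro x y; ext n; simp [PiLp.add_apply]
      map_smul' := by intro a x; ext n; simp [PiLp.smul_apply]
      left_inv := by intro x; ext n; exact congrArg x (σ.apply_symm_apply n)
      right_inv := by intro x; ext n; exact congrArg x (σ.symm_apply_apply n) } ?_
  intro x y
  simp only [PiLp.inner_apply, RCLike.inner_apply', LinearEquiv.coe_mk, LinearMap.coe_mk,
    AddHom.coe_mk, PiLp.toLp_apply]
  exact Equiv.sum_comp σ (fun n => conj (x n) * y n)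

@[simp] lemma permU_apply (σ : Equiv.Perm (Fin D)) (u : EuclideanSpace ℂ (Fin D)) (n : Fin D) :
    permU σ u n = u (σ n) := rfl

noncomputable def rsc : ℂ := (((Real.sqrt 2 : ℝ) : ℂ))⁻¹

lemma rsc_conj : conj rsc = rsc := by
  rw [rsc, map_inv₀, Complex.conj_ofReal]

lemma rsc_sq : rsc * rsc = 2⁻¹ := by
  rw [rsc, ← mul_inv, ← Complex.ofReal_mul, Real.mul_self_sqrt (by norm_num)]
  norm_num

/-- rotation unitary mixing two coordinates -/
noncomputable def rotU (i j : Fin D) (hij : i ≠ j) :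
    EuclideanSpace ℂ (Fin D) ≃ₗᵢ[ℂ] EuclideanSpace ℂ (Fin D) := by
  have hinv : ∀ x : EuclideanSpace ℂ (Fin D), ∀ n : Fin D,
      (fun u : EuclideanSpace ℂ (Fin D) => (WithLp.toLp 2 fun n =>
        if n = i then rsc * (u i + u j) else if n = j then rsc * (u i - u j) else u n :
          EuclideanSpace ℂ (Fin D)))
      ((fun u : EuclideanSpace ℂ (Fin D) => (WithLp.toLp 2 fun n =>
        if n = i then rsc * (u i + u j) else if n = j then rsc * (u i - u j) else u n :
          EuclideanSpace ℂ (Fin D))) x) n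
      = x n := by
    intro x n
    by_cases hn : n = i
    · subst hn
      simp only [PiLp.toLp_apply, if_pos rfl, if_neg hij, if_neg hij.symm, ite_true]
      linear_combination (2 * x n) * rsc_sq
    · by_cases hn' : n = j
      · subst hn'
        simp only [PiLp.toLp_apply, if_pos rfl, if_neg hij, if_neg hij.symm, if_neg hn, ite_true]
        linear_combination (2 * x n) * rsc_sq
      · simp only [PiLp.toLp_apply, if_neg hn, if_neg hn']
  refine LinearEquiv.isometryOfInner
    { toFun := fun u => WithLp.toLp 2 fun n =>
        if n = i then rsc * (u i + u j) else if n = j then rsc * (u i - u j) else u n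
      invFun := fun u => WithLp.toLp 2 fun n =>
        if n = i then rsc * (u i + u j) else if n = j then rsc * (u i - u j) else u n
      map_add' := by
        intro x y; ext n; simp only [PiLp.add_apply, PiLp.toLp_apply]; split_ifs <;> ring
      map_smul' := by
        intro a x; ext n
        simp only [PiLp.smul_apply, PiLp.toLp_apply, smul_eq_mul, RingHom.id_apply]
        split_ifs <;> ring
      left_inv := fun x => PiLp.ext (hinv x)
      right_inv := fun x => PiLp.ext (hinv x) } ?_
  intro x y
  simp only [PiLp.inner_apply, RCLike.inner_apply', LinearEquiv.coe_mk, LinearMap.coe_mk,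
    AddHom.coe_mk, PiLp.toLp_apply]
  rw [← Finset.sum_add_sum_compl {i, j}, ← Finset.sum_add_sum_compl {i, j}
    (fun n => (starRingEnd ℂ) (x n) * y n)]
  congr 1
  · rw [Finset.sum_pair hij, Finset.sum_pair hij]
    simp only [if_pos rfl, if_neg hij, if_neg hij.symm, ite_true, _root_.map_mul, map_add,
      map_sub, rsc_conj]
    linear_combination (2 * (conj (x i) * y i + conj (x j) * y j)) * rsc_sq
  · refine Finset.sum_congr rfl fun n hn => ?_
    simp only [Finset.mem_compl, Finset.mem_insert, Finset.mem_singleton, not_or] at hn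
    simp only [if_neg hn.1, if_neg hn.2]

@[simp] lemma rotU_apply (i j : Fin D) (hij : i ≠ j) (u : EuclideanSpace ℂ (Fin D)) (n : Fin D) :
    rotU i j hij u n =
      if n = i then rsc * (u i + u j) else if n = j then rsc * (u i - u j) else u n := rfl

lemma mono4_phase (i j k l m : Fin D) (u : EuclideanSpace ℂ (Fin D)) :
    mono4 i j k l (phaseU m Complex.I (by simp) u)
      = ((if i = m then -Complex.I else 1) * (if j = m then Complex.I else 1)
        * ((if k = m then -Complex.I else 1) * (if l = m then Complex.I else 1)))
        * mono4 i j k l u := by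
  unfold mono4
  simp only [phaseU_apply, _root_.map_mul, apply_ite (starRingEnd ℂ), Complex.conj_I,
    RingHom.map_one]
  ring

lemma mono2_phase_neg (i j m : Fin D) (u : EuclideanSpace ℂ (Fin D)) :
    mono2 i j (phaseU m (-1) (by simp) u)
      = ((if i = m then -1 else 1) * (if j = m then -1 else 1)) * mono2 i j u := by
  unfold mono2
  simp only [phaseU_apply, _root_.map_mul, apply_ite (starRingEnd ℂ), map_neg,
    RingHom.map_one]
  ring

section Measure
variable (μ : Measure (EuclideanSpace ℂ (Fin D))) [IsProbabilityMeasure μ]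
variable (hsupp : ∀ᵐ u ∂μ, ‖u‖ = 1)
variable (hinv : ∀ U : EuclideanSpace ℂ (Fin D) ≃ₗᵢ[ℂ] EuclideanSpace ℂ (Fin D), μ.map U = μ)

include hsupp in
lemma integrable_mono4 (i j k l : Fin D) : Integrable (mono4 i j k l) μ := by
  refine Integrable.mono' (integrable_const 1) (cont_mono4 i j k l).aestronglyMeasurable ?_
  filter_upwards [hsupp] with u hu
  have h1 := norm_coord_le u i; have h2 := norm_coord_le u j
  have h3 := norm_coord_le u k; have h4 := norm_coord_le u l
  rw [hu] at h1 h2 h3 h4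
  have e : ‖mono4 i j k l u‖ = ‖u i‖ * ‖u j‖ * (‖u k‖ * ‖u l‖) := by
    simp [mono4, norm_mul]
  rw [e]
  have hab : ‖u i‖ * ‖u j‖ ≤ 1 := mul_le_one₀ h1 (norm_nonneg _) h2
  have hcd : ‖u k‖ * ‖u l‖ ≤ 1 := mul_le_one₀ h3 (norm_nonneg _) h4
  exact mul_le_one₀ hab (by positivity) hcd

include hsupp in
lemma integrable_mono2 (i j : Fin D) : Integrable (mono2 i j) μ := by
  refine Integrable.mono' (integrable_const 1) (cont_mono2 i j).aestronglyMeasurable ?_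
  filter_upwards [hsupp] with u hu
  have h1 := norm_coord_le u i; have h2 := norm_coord_le u j
  rw [hu] at h1 h2
  have e : ‖mono2 i j u‖ = ‖u i‖ * ‖u j‖ := by simp [mono2, norm_mul]
  rw [e]
  exact mul_le_one₀ h1 (norm_nonneg _) h2

omit [IsProbabilityMeasure μ] in
include hinv in
lemma integral_comp_iso (U : EuclideanSpace ℂ (Fin D) ≃ₗᵢ[ℂ] EuclideanSpace ℂ (Fin D))
    (f : EuclideanSpace ℂ (Fin D) → ℂ) (hf : AEStronglyMeasurable f μ) :
    ∫ u, f (U u) ∂μ = ∫ u, f u ∂μ := by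
  conv_rhs => rw [← hinv U]
  rw [integral_map (U.continuous.measurable.aemeasurable) (by rwa [hinv U])]

noncomputable def I4 (i j k l : Fin D) : ℂ := ∫ u, mono4 i j k l u ∂μ
noncomputable def I2 (i j : Fin D) : ℂ := ∫ u, mono2 i j u ∂μ

omit [IsProbabilityMeasure μ] in
lemma I4_def (i j k l : Fin D) : ∫ u, mono4 i j k l u ∂μ = I4 μ i j k l := rfl
omit [IsProbabilityMeasure μ] in
lemma I2_def (i j : Fin D) : ∫ u, mono2 i j u ∂μ = I2 μ i j := rfl

omit [IsProbabilityMeasure μ] in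
include hinv in
lemma I4_perm (σ : Equiv.Perm (Fin D)) (i j k l : Fin D) :
    I4 μ (σ i) (σ j) (σ k) (σ l) = I4 μ i j k l := by
  have h : (fun u => mono4 (σ i) (σ j) (σ k) (σ l) u)
      = fun u => mono4 i j k l (permU σ u) := rfl
  unfold I4
  rw [h, integral_comp_iso μ hinv (permU σ) _ (cont_mono4 i j k l).aestronglyMeasurable]

omit [IsProbabilityMeasure μ] in
include hinv in
lemma I2_perm (σ : Equiv.Perm (Fin D)) (i j : Fin D) :
    I2 μ (σ i) (σ j) = I2 μ i j := by
  have h : (fun u => mono2 (σ i) (σ j) u) = fun u => mono2 i j (permU σ u) := rfl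
  unfold I2
  rw [h, integral_comp_iso μ hinv (permU σ) _ (cont_mono2 i j).aestronglyMeasurable]

omit [IsProbabilityMeasure μ] in
include hinv in
lemma I4_vanish (i j k l m : Fin D)
    (hm : ((if j = m then 1 else 0) + (if l = m then 1 else 0) : ℤ)
        ≠ (if i = m then 1 else 0) + (if k = m then 1 else 0)) :
    I4 μ i j k l = 0 := by
  have hrel : I4 μ i j k l = ((if i = m then -Complex.I else 1) * (if j = m then Complex.I else 1)
      * ((if k = m then -Complex.I else 1) * (if l = m then Complex.I else 1))) * I4 μ i j k l := by
    conv_lhs => rw [I4,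
      ← integral_comp_iso μ hinv (phaseU m Complex.I (by simp)) _
        (cont_mono4 i j k l).aestronglyMeasurable]
    simp only [mono4_phase]
    rw [integral_const_mul, I4_def]
  split_ifs at hrel hm <;>
    first
      | (exfalso; exact hm rfl)
      | exact eq_zero_of_self_eq_mul hrel (by norm_num [Complex.ext_iff])

omit [IsProbabilityMeasure μ] in
include hinv in
lemma I2_vanish (i j : Fin D) (hij : i ≠ j) : I2 μ i j = 0 := by
  have hw : ∀ u, mono2 i j (phaseU i (-1) (by simp) u) = (-1) * mono2 i j u := by
    intro u
    rw [mono2_phase_neg, if_pos rfl, if_neg (Ne.symm hij)]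
    ring
  have hrel : I2 μ i j = (-1) * I2 μ i j := by
    conv_lhs => rw [I2,
      ← integral_comp_iso μ hinv (phaseU i (-1) (by simp)) _
        (cont_mono2 i j).aestronglyMeasurable]
    simp only [hw]
    rw [integral_const_mul, I2_def]
  exact eq_zero_of_self_eq_mul hrel (by norm_num [Complex.ext_iff])

omit [IsProbabilityMeasure μ] in
include hinv in
lemma I4_diag_eq (i i' : Fin D) : I4 μ i i i i = I4 μ i' i' i' i' := by
  have := I4_perm μ hinv (Equiv.swap i' i) i' i' i' i'
  rwa [Equiv.swap_apply_left] at this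

omit [IsProbabilityMeasure μ] in
include hinv in
lemma I4_offdiag_eq (i k i' k' : Fin D) (h : i ≠ k) (h' : i' ≠ k') :
    I4 μ i i k k = I4 μ i' i' k' k' := by
  set τ := Equiv.swap i' i with hτ
  have hτk : τ k' ≠ i := by
    intro hcontra
    have : τ k' = τ i' := by rw [hcontra, hτ, Equiv.swap_apply_left]
    exact h' (τ.injective this).symm
  set δ := Equiv.swap (τ k') k with hδ
  have h1 : δ (τ i') = i := by
    rw [hτ, Equiv.swap_apply_left, hδ]
    exact Equiv.swap_apply_of_ne_of_ne (Ne.symm hτk) h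
  have h2 : δ (τ k') = k := by rw [hδ, Equiv.swap_apply_left]
  have := I4_perm μ hinv (τ.trans δ) i' i' k' k'
  simp only [Equiv.trans_apply, h1, h2] at this
  exact this

omit [IsProbabilityMeasure μ] in
include hinv in
lemma I2_diag_eq (i i' : Fin D) : I2 μ i i = I2 μ i' i' := by
  have := I2_perm μ hinv (Equiv.swap i' i) i' i'
  rwa [Equiv.swap_apply_left] at this

include hsupp in
lemma sum_I2 : ∑ i, I2 μ i i = 1 := by
  unfold I2
  rw [← integral_finset_sum _ (fun i _ => integrable_mono2 μ hsupp i i)]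
  have h : ∀ᵐ u ∂μ, (∑ i, mono2 i i u) = (1 : ℂ) := by
    filter_upwards [hsupp] with u hu
    have e : (∑ i, mono2 i i u) = (inner ℂ u u : ℂ) := by
      simp only [mono2, PiLp.inner_apply, RCLike.inner_apply']
    rw [e, inner_self_eq_norm_sq_to_K, hu]
    norm_num
  rw [integral_congr_ae h]
  simp

include hsupp in
lemma sum_I4 : ∑ i, ∑ k, I4 μ i i k k = 1 := by
  unfold I4
  have step1 : ∀ i : Fin D, (∑ k, ∫ u, mono4 i i k k u ∂μ) = ∫ u, ∑ k, mono4 i i k k u ∂μ :=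
    fun i => (integral_finset_sum _ (fun k _ => integrable_mono4 μ hsupp i i k k)).symm
  simp only [step1]
  rw [← integral_finset_sum _ (fun i _ =>
    integrable_finset_sum _ (fun k _ => integrable_mono4 μ hsupp i i k k))]
  have h : ∀ᵐ u ∂μ, (∑ i, ∑ k, mono4 i i k k u) = (1 : ℂ) := by
    filter_upwards [hsupp] with u hu
    have e : (∑ i, ∑ k, mono4 i i k k u)
        = (∑ i, mono2 i i u) * (∑ k, mono2 k k u) := by
      rw [Finset.sum_mul_sum]
      simp only [mono2_mul_mono2]
    have e2 : (∑ i, mono2 i i u) = (inner ℂ u u : ℂ) := by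
      simp only [mono2, PiLp.inner_apply, RCLike.inner_apply']
    rw [e, e2, inner_self_eq_norm_sq_to_K, hu]
    norm_num
  rw [integral_congr_ae h]
  simp

include hsupp hinv in
lemma rot_rel (i j : Fin D) (hij : i ≠ j) : I4 μ i i i i = 2 * I4 μ i i j j := by
  classical
  have hpt : ∀ u, mono4 i i i i (rotU i j hij u)
      = 4⁻¹ * ∑ t : Fin 2 × Fin 2 × Fin 2 × Fin 2,
          mono4 (![i,j] t.1) (![i,j] t.2.1) (![i,j] t.2.2.1) (![i,j] t.2.2.2) u := by
    intro u
    simp only [Fintype.sum_prod_type, Fin.sum_univ_two, Matrix.cons_val_zero,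
      Matrix.cons_val_one, Matrix.head_cons, mono4, rotU_apply, if_pos rfl,
      if_neg hij, if_neg hij.symm, ite_true, _root_.map_mul, map_add, rsc_conj]
    linear_combination ((rsc * rsc + 2⁻¹)
      * (((starRingEnd ℂ) (u i) + (starRingEnd ℂ) (u j)) * (u i + u j))^2) * rsc_sq
  have heq : I4 μ i i i i = 4⁻¹ * ∑ t : Fin 2 × Fin 2 × Fin 2 × Fin 2,
      I4 μ (![i,j] t.1) (![i,j] t.2.1) (![i,j] t.2.2.1) (![i,j] t.2.2.2) := by
    conv_lhs => rw [I4,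
      ← integral_comp_iso μ hinv (rotU i j hij) _ (cont_mono4 i i i i).aestronglyMeasurable]
    rw [show (fun u => mono4 i i i i (rotU i j hij u)) = fun u => 4⁻¹ *
        ∑ t : Fin 2 × Fin 2 × Fin 2 × Fin 2,
          mono4 (![i,j] t.1) (![i,j] t.2.1) (![i,j] t.2.2.1) (![i,j] t.2.2.2) u from
      funext hpt]
    rw [integral_const_mul, integral_finset_sum _
      (fun t _ => integrable_mono4 μ hsupp (![i,j] t.1) (![i,j] t.2.1)
        (![i,j] t.2.2.1) (![i,j] t.2.2.2))]
    simp only [I4_def]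
  rw [Fintype.sum_prod_type] at heq
  simp only [Fintype.sum_prod_type, Fin.sum_univ_two, Matrix.cons_val_zero,
    Matrix.cons_val_one, Matrix.head_cons] at heq
  have v1 : I4 μ i i i j = 0 := I4_vanish μ hinv i i i j j (by simp [hij])
  have v2 : I4 μ i i j i = 0 := I4_vanish μ hinv i i j i j (by simp [hij])
  have v3 : I4 μ i j i i = 0 := I4_vanish μ hinv i j i i j (by simp [hij])
  have v4 : I4 μ j i i i = 0 := I4_vanish μ hinv j i i i j (by simp [hij])
  have v5 : I4 μ i j i j = 0 := I4_vanish μ hinv i j i j j (by simp [hij])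
  have v6 : I4 μ j i j i = 0 := I4_vanish μ hinv j i j i j (by simp [hij])
  have v7 : I4 μ i j j j = 0 := I4_vanish μ hinv i j j j i (by simp [hij, hij.symm])
  have v8 : I4 μ j i j j = 0 := I4_vanish μ hinv j i j j i (by simp [hij, hij.symm])
  have v9 : I4 μ j j i j = 0 := I4_vanish μ hinv j j i j i (by simp [hij, hij.symm])
  have v10 : I4 μ j j j i = 0 := I4_vanish μ hinv j j j i i (by simp [hij, hij.symm])
  have c1 : I4 μ i j j i = I4 μ i i j j := by
    have h : mono4 i j j i = mono4 i i j j := by funext u; unfold mono4; ring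
    unfold I4; rw [h]
  have c2 : I4 μ j i i j = I4 μ j j i i := by
    have h : mono4 j i i j = mono4 j j i i := by funext u; unfold mono4; ring
    unfold I4; rw [h]
  have c3 : I4 μ j j i i = I4 μ i i j j := I4_offdiag_eq μ hinv j i i j hij.symm hij
  have c4 : I4 μ j j j j = I4 μ i i i i := I4_diag_eq μ hinv j i
  rw [v1, v2, v3, v4, v5, v6, v7, v8, v9, v10, c1, c2, c3, c4] at heq
  linear_combination 2 * heq

include hsupp hinv in
lemma I4_value (hD : 1 ≤ D) (a b : Fin D) :
    I4 μ a a b b = if a = b then 2 * ((D:ℂ)^2 + (D:ℂ))⁻¹ else ((D:ℂ)^2 + (D:ℂ))⁻¹ := by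
  classical
  by_cases hD2 : 2 ≤ D
  · set i0 : Fin D := ⟨0, by omega⟩ with hi0
    set i1 : Fin D := ⟨1, by omega⟩ with hi1
    have h01 : i0 ≠ i1 := by simp [hi0, hi1, Fin.ext_iff]
    set s := I4 μ i0 i0 i0 i0 with hs
    set d := I4 μ i0 i0 i1 i1 with hd
    have hs2d : s = 2 * d := rot_rel μ hsupp hinv i0 i1 h01
    have hval : ∀ a b : Fin D, I4 μ a a b b = if a = b then s else d := by
      intro a b
      split_ifs with h
      · subst h; exact I4_diag_eq μ hinv a i0
      · exact I4_offdiag_eq μ hinv a b i0 i1 h h01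
    have hrow : ∀ a : Fin D, (∑ b, I4 μ a a b b) = (s - d) + (D:ℂ) * d := by
      intro a
      rw [Finset.sum_congr rfl (fun b _ => hval a b)]
      rw [Finset.sum_congr rfl (fun b _ =>
        show (if a = b then s else d) = (if a = b then s - d else 0) + d by split_ifs <;> ring)]
      rw [Finset.sum_add_distrib, Finset.sum_ite_eq, Finset.sum_const, Finset.card_univ,
        Fintype.card_fin, nsmul_eq_mul]
      simp
    have hsum2 : (D:ℂ) * ((s - d) + (D:ℂ) * d) = 1 := by
      calc (D:ℂ) * ((s - d) + (D:ℂ) * d) = ∑ _a : Fin D, ((s - d) + (D:ℂ) * d) := by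
            rw [Finset.sum_const, Finset.card_univ, Fintype.card_fin, nsmul_eq_mul]
      _ = ∑ a : Fin D, ∑ b : Fin D, I4 μ a a b b :=
            Finset.sum_congr rfl (fun a _ => (hrow a).symm)
      _ = 1 := sum_I4 μ hsupp
    have hXd : ((D:ℂ)^2 + (D:ℂ)) * d = 1 := by
      linear_combination hsum2 - (D:ℂ) * hs2d
    have hdval : d = ((D:ℂ)^2 + (D:ℂ))⁻¹ := (inv_eq_of_mul_eq_one_right hXd).symm
    rw [hval a b]
    split_ifs with h
    · rw [hs2d, hdval]
    · exact hdval
  · have hD1 : D = 1 := by omega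
    subst hD1
    have hab : a = b := Subsingleton.elim a b
    subst hab
    have h0 : a = 0 := Subsingleton.elim a 0
    subst h0
    have hsum := sum_I4 μ hsupp
    simp only [Fin.sum_univ_one] at hsum
    rw [if_pos rfl, hsum]
    norm_num

include hsupp hinv in
lemma I4_master (hD : 1 ≤ D) (i j k l : Fin D) :
    I4 μ i j k l = ((D:ℂ)^2 + (D:ℂ))⁻¹ *
      ((if i = j then 1 else 0) * (if k = l then 1 else 0)
        + (if i = l then 1 else 0) * (if k = j then 1 else 0)) := by
  classical
  by_cases hc1 : i = j ∧ k = l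
  · obtain ⟨h1, h2⟩ := hc1
    subst h1; subst h2
    by_cases hik : i = k
    · subst hik
      rw [I4_value μ hsupp hinv hD i i, if_pos rfl]
      simp
      ring
    · rw [I4_value μ hsupp hinv hD i k, if_neg hik]
      rw [if_pos rfl, if_pos rfl, if_neg hik, if_neg (fun h : k = i => hik h.symm)]
      ring
  · by_cases hc2 : i = l ∧ k = j
    · obtain ⟨h1, h2⟩ := hc2
      subst h1; subst h2
      have hik : i ≠ k := fun h => hc1 ⟨h, h.symm⟩
      have hc : I4 μ i k k i = I4 μ i i k k := by
        have h : mono4 i k k i = mono4 i i k k := by funext u; unfold mono4; ring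
        unfold I4; rw [h]
      rw [hc, I4_value μ hsupp hinv hD i k, if_neg hik]
      rw [if_neg hik, if_neg (fun h : k = i => hik h.symm), if_pos rfl, if_pos rfl]
      ring
    · by_cases h1 : j = i
      · subst h1
        have hkl : k ≠ l := fun h => hc1 ⟨rfl, h⟩
        have hm : ((if j = l then 1 else 0) + (if l = l then 1 else 0) : ℤ)
            ≠ (if j = l then 1 else 0) + (if k = l then 1 else 0) := by
          rw [if_pos rfl, if_neg hkl]
          split_ifs <;> omega
        rw [I4_vanish μ hinv j j k l l hm]
        have hz : ((if j = l then (1:ℂ) else 0) * (if k = j then 1 else 0)) = 0 := by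
          by_cases hil : j = l
          · rw [if_neg (show ¬ k = j from fun h => hkl (h.trans hil)), mul_zero]
          · rw [if_neg hil, zero_mul]
        rw [if_neg hkl, hz]
        simp
      · by_cases h2 : j = k
        · subst h2
          have hil : i ≠ l := fun h => hc2 ⟨h, rfl⟩
          have hm : ((if j = i then 1 else 0) + (if l = i then 1 else 0) : ℤ)
              ≠ (if i = i then 1 else 0) + (if j = i then 1 else 0) := by
            rw [if_neg h1, if_neg (show ¬ l = i from fun h => hil h.symm), if_pos rfl]
            norm_num
          rw [I4_vanish μ hinv i j j l i hm]
          rw [if_neg (show ¬ i = j from fun h => h1 h.symm), if_neg hil]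
          simp
        · have hm : ((if j = j then 1 else 0) + (if l = j then 1 else 0) : ℤ)
              ≠ (if i = j then 1 else 0) + (if k = j then 1 else 0) := by
            rw [if_pos rfl, if_neg (show ¬ i = j from fun h => h1 h.symm),
              if_neg (show ¬ k = j from fun h => h2 h.symm)]
            split_ifs <;> omega
          rw [I4_vanish μ hinv i j k l j hm]
          rw [if_neg (show ¬ i = j from fun h => h1 h.symm),
            if_neg (show ¬ k = j from fun h => h2 h.symm)]
          simp

include hsupp hinv in
lemma I2_master (hD : 1 ≤ D) (i j : Fin D) :
    I2 μ i j = if i = j then ((D:ℂ))⁻¹ else 0 := by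
  by_cases h : i = j
  · subst h
    rw [if_pos rfl]
    have hsum := sum_I2 μ hsupp
    have hall : ∀ k : Fin D, I2 μ k k = I2 μ i i := fun k => I2_diag_eq μ hinv k i
    rw [Finset.sum_congr rfl (fun k _ => hall k), Finset.sum_const, Finset.card_univ,
      Fintype.card_fin, nsmul_eq_mul] at hsum
    exact (inv_eq_of_mul_eq_one_right hsum).symm
  · rw [if_neg h]
    exact I2_vanish μ hinv i j h

omit [IsProbabilityMeasure μ] in
lemma expval_eq_sum (P : Matrix (Fin D) (Fin D) ℂ) (u : EuclideanSpace ℂ (Fin D)) :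
    expval P u = ∑ i, ∑ j, P i j * mono2 i j u := by
  simp only [expval, PiLp.inner_apply, RCLike.inner_apply']
  refine Finset.sum_congr rfl fun i _ => ?_
  have h : (Matrix.toEuclideanLin P u) i = ∑ j, P i j * u j := by
    simp [Matrix.toEuclideanLin_apply, Matrix.mulVec, dotProduct]
  rw [h, Finset.mul_sum]
  refine Finset.sum_congr rfl fun j _ => ?_
  unfold mono2; ring

include hsupp hinv in
lemma integral_expval (hD : 1 ≤ D) (P : Matrix (Fin D) (Fin D) ℂ) :
    ∫ u, expval P u ∂μ = (D:ℂ)⁻¹ * P.trace := by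
  simp only [expval_eq_sum]
  rw [integral_finset_sum _ (fun i _ => integrable_finset_sum _
    (fun j _ => (integrable_mono2 μ hsupp i j).const_mul (P i j)))]
  rw [Finset.sum_congr rfl (fun i _ => integral_finset_sum _
    (fun j _ => (integrable_mono2 μ hsupp i j).const_mul (P i j)))]
  have h1 : ∀ i j : Fin D, ∫ u, P i j * mono2 i j u ∂μ = P i j * I2 μ i j := fun i j => by
    rw [integral_const_mul, I2_def]
  rw [Finset.sum_congr rfl (fun i _ => Finset.sum_congr rfl (fun j _ => h1 i j))]
  simp only [I2_master μ hsupp hinv hD]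
  have h2 : ∀ i : Fin D, (∑ j, P i j * (if i = j then ((D:ℂ))⁻¹ else 0)) = P i i * (D:ℂ)⁻¹ := by
    intro i
    simp only [mul_ite, mul_zero]
    rw [Finset.sum_ite_eq]
    simp
  rw [Finset.sum_congr rfl (fun i _ => h2 i), ← Finset.sum_mul]
  rw [show (∑ i, P i i) = P.trace from rfl]
  ring

omit [IsProbabilityMeasure μ] in
lemma expval_sq_eq (P : Matrix (Fin D) (Fin D) ℂ) (u : EuclideanSpace ℂ (Fin D)) :
    (expval P u)^2 = ∑ i, ∑ k, ∑ j, ∑ l, P i j * P k l * mono4 i j k l u := by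
  rw [sq, expval_eq_sum, Finset.sum_mul_sum]
  refine Finset.sum_congr rfl fun i _ => ?_
  refine Finset.sum_congr rfl fun k _ => ?_
  rw [Finset.sum_mul_sum]
  refine Finset.sum_congr rfl fun j _ => ?_
  refine Finset.sum_congr rfl fun l _ => ?_
  rw [← mono2_mul_mono2]
  ring

include hsupp hinv in
lemma integral_expval_sq (hD : 1 ≤ D) (P : Matrix (Fin D) (Fin D) ℂ) :
    ∫ u, (expval P u)^2 ∂μ = ((D:ℂ)^2 + (D:ℂ))⁻¹ * (P.trace^2 + (P * P).trace) := by
  simp only [expval_sq_eq]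
  rw [integral_finset_sum _ (fun i _ => integrable_finset_sum _ (fun k _ =>
    integrable_finset_sum _ (fun j _ => integrable_finset_sum _ (fun l _ =>
      (integrable_mono4 μ hsupp i j k l).const_mul _))))]
  rw [Finset.sum_congr rfl (fun i _ => integral_finset_sum _ (fun k _ =>
    integrable_finset_sum _ (fun j _ => integrable_finset_sum _ (fun l _ =>
      (integrable_mono4 μ hsupp i j k l).const_mul _))))]
  rw [Finset.sum_congr rfl (fun i _ => Finset.sum_congr rfl (fun k _ =>
    integral_finset_sum _ (fun j _ => integrable_finset_sum _ (fun l _ =>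
      (integrable_mono4 μ hsupp i j k l).const_mul _))))]
  rw [Finset.sum_congr rfl (fun i _ => Finset.sum_congr rfl (fun k _ =>
    Finset.sum_congr rfl (fun j _ => integral_finset_sum _ (fun l _ =>
      (integrable_mono4 μ hsupp i j k l).const_mul _))))]
  have h1 : ∀ i j k l : Fin D, ∫ u, P i j * P k l * mono4 i j k l u ∂μ
      = P i j * P k l * I4 μ i j k l := fun i j k l => by
    rw [integral_const_mul, I4_def]
  rw [Finset.sum_congr rfl (fun i _ => Finset.sum_congr rfl (fun k _ =>
    Finset.sum_congr rfl (fun j _ => Finset.sum_congr rfl (fun l _ => h1 i j k l))))]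
  simp only [I4_master μ hsupp hinv hD]
  have h2 : ∀ i k : Fin D, (∑ j, ∑ l, P i j * P k l * (((D:ℂ)^2 + (D:ℂ))⁻¹ *
      ((if i = j then 1 else 0) * (if k = l then 1 else 0)
        + (if i = l then 1 else 0) * (if k = j then 1 else 0))))
      = ((D:ℂ)^2 + (D:ℂ))⁻¹ * (P i i * P k k + P i k * P k i) := by
    intro i k
    have h3 : ∀ j l : Fin D, P i j * P k l * (((D:ℂ)^2 + (D:ℂ))⁻¹ *
        ((if i = j then 1 else 0) * (if k = l then 1 else 0)
          + (if i = l then 1 else 0) * (if k = j then 1 else 0)))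
        = (if i = j then (if k = l then ((D:ℂ)^2 + (D:ℂ))⁻¹ * (P i j * P k l) else 0) else 0)
          + (if i = l then (if k = j then ((D:ℂ)^2 + (D:ℂ))⁻¹ * (P i j * P k l) else 0) else 0) := by
      intro j l
      split_ifs <;> ring
    rw [Finset.sum_congr rfl (fun j _ => Finset.sum_congr rfl (fun l _ => h3 j l))]
    simp only [Finset.sum_add_distrib, Finset.sum_ite_eq, Finset.mem_univ, if_true]
    have h5 : ∀ x : Fin D,
        (∑ x1, if i = x then (if k = x1 then ((D:ℂ)^2 + (D:ℂ))⁻¹ * (P i x * P k x1) else 0) else 0)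
        = (if i = x then ((D:ℂ)^2 + (D:ℂ))⁻¹ * (P i x * P k k) else 0) := by
      intro x
      split_ifs with h
      · rw [Finset.sum_ite_eq]; simp
      · simp
    rw [Finset.sum_congr rfl (fun x _ => h5 x), Finset.sum_ite_eq]
    simp only [Finset.mem_univ, if_true]
    ring
  rw [Finset.sum_congr rfl (fun i _ => Finset.sum_congr rfl (fun k _ => h2 i k))]
  simp only [mul_add, Finset.sum_add_distrib, ← Finset.mul_sum]
  have htr2 : (P * P).trace = ∑ i, ∑ k, P i k * P k i := by
    simp [Matrix.trace, Matrix.diag, Matrix.mul_apply]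
  rw [htr2, show P.trace = ∑ i, P i i from rfl, ← Finset.sum_mul]
  ring

end Measure


lemma trace_proj {D : ℕ} {P : Matrix (Fin D) (Fin D) ℂ} (hherm : P.IsHermitian)
    (hproj : P * P = P) : P.trace = (P.rank : ℂ) := by
  classical
  have heig : ∀ i, hherm.eigenvalues i = 0 ∨ hherm.eigenvalues i = 1 := by
    intro i
    have hv := hherm.mulVec_eigenvectorBasis i
    have hv2 := congrArg (fun w => P *ᵥ w) hv
    simp only at hv2
    rw [Matrix.mulVec_mulVec, hproj, hv, Matrix.mulVec_smul, hv, smul_smul] at hv2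
    have hvne : (⇑(hherm.eigenvectorBasis i) : Fin D → ℂ) ≠ 0 := by
      intro h0
      have hn := hherm.eigenvectorBasis.orthonormal.1 i
      rw [show (hherm.eigenvectorBasis i) = 0 from by ext j; simpa using congrFun h0 j] at hn
      simp at hn
    have heq : ((hherm.eigenvalues i - hherm.eigenvalues i * hherm.eigenvalues i))
        • (⇑(hherm.eigenvectorBasis i) : Fin D → ℂ) = 0 := by
      rw [sub_smul, hv2, sub_self]
    rcases smul_eq_zero.mp heq with h | h
    · rcases mul_eq_zero.mp (show hherm.eigenvalues i * (1 - hherm.eigenvalues i) = 0 from by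
        linear_combination h) with h' | h'
      · left; exact h'
      · right; linarith
    · exact absurd h hvne
  have htr : P.trace = ∑ i, (hherm.eigenvalues i : ℂ) := hherm.trace_eq_sum_eigenvalues
  rw [htr, Matrix.IsHermitian.rank_eq_card_non_zero_eigs hherm]
  have hite : ∀ i, ((hherm.eigenvalues i : ℂ)) = if hherm.eigenvalues i ≠ 0 then 1 else 0 := by
    intro i
    rcases heig i with h | h <;> simp [h]
  rw [Finset.sum_congr rfl (fun i _ => hite i), Finset.sum_boole, Fintype.card_subtype]

lemma final_arith (Dr rr a : ℝ) (h1 : 1 ≤ rr) (h2 : rr ≤ Dr) (ha : 0 ≤ a) :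
    (Dr * (a / rr))^2 * ((rr^2 + rr)/(Dr^2 + Dr) - (rr/Dr)^2) ≤ a^2 / rr := by
  have hr : (0:ℝ) < rr := by linarith
  have hD : (0:ℝ) < Dr := by linarith
  have key : (Dr * (a / rr))^2 * ((rr^2 + rr)/(Dr^2 + Dr) - (rr/Dr)^2)
      = a^2 * (Dr - rr) / (rr * (Dr + 1)) := by
    field_simp
    ring
  rw [key, div_le_div_iff₀ (by positivity) hr]
  nlinarith [sq_nonneg a, mul_nonneg (sq_nonneg a) hr.le]
end BornVar

/-- variance bound from the paper's Lemma 11: for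
`ρ = (1−α)·I/D + α·P/r` with `P` a rank-`r` orthogonal projection and the
rotation-invariant probability measure `μ` on the unit sphere of `ℂ^D`, the density
`p(u) = D⟨u,ρu⟩` satisfies `∫ p² dμ − (∫ p dμ)² ≤ α²/r`. -/
theorem born_density_variance (D r : ℕ) (hD : 1 ≤ D) (hr : 1 ≤ r) (hrD : r ≤ D)
    (α : ℝ) (hα0 : 0 ≤ α) (hα1 : α ≤ 1)
    (P : Matrix (Fin D) (Fin D) ℂ) (hherm : P.IsHermitian) (hproj : P * P = P)
    (hrank : P.rank = r)
    (μ : Measure (EuclideanSpace ℂ (Fin D))) [IsProbabilityMeasure μ]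
    (hsupp : ∀ᵐ u ∂μ, ‖u‖ = 1)
    (hinv : ∀ U : EuclideanSpace ℂ (Fin D) ≃ₗᵢ[ℂ] EuclideanSpace ℂ (Fin D),
      μ.map U = μ)
    (ρ : Matrix (Fin D) (Fin D) ℂ)
    (hρ : ρ = ((1 - α) / D : ℝ) • (1 : Matrix (Fin D) (Fin D) ℂ) + (α / r : ℝ) • P) :
    (∫ u, ((D : ℝ) * (expval ρ u).re) ^ 2 ∂μ)
        - (∫ u, (D : ℝ) * (expval ρ u).re ∂μ) ^ 2
      ≤ α ^ 2 / r := by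
  classical
  open BornVar in
  have hD0 : (0:ℝ) < D := by exact_mod_cast hD
  have hr0 : (0:ℝ) < r := by exact_mod_cast hr
  set g : EuclideanSpace ℂ (Fin D) → ℝ := fun u => (expval P u).re with hgdef
  have hreal : ∀ u, expval P u = ((g u : ℝ) : ℂ) := by
    intro u
    have hsym := (Matrix.isHermitian_iff_isSymmetric.mp hherm)
    have hconj : (starRingEnd ℂ) (expval P u) = expval P u := by
      show (starRingEnd ℂ) (inner ℂ u ((Matrix.toEuclideanLin P) u)) = _
      rw [inner_conj_symm]
      exact hsym u u
    exact (Complex.conj_eq_iff_re.mp hconj).symm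
  have htr : P.trace = (r:ℂ) := by rw [trace_proj hherm hproj, hrank]
  have htrPP : (P * P).trace = (r:ℂ) := by rw [hproj, htr]
  have hTint : Integrable (fun u => expval P u) μ := by
    rw [funext (expval_eq_sum P)]
    exact integrable_finset_sum _ (fun i _ => integrable_finset_sum _
      (fun j _ => (integrable_mono2 μ hsupp i j).const_mul _))
  have hT2int : Integrable (fun u => (expval P u)^2) μ := by
    rw [funext (expval_sq_eq P)]
    exact integrable_finset_sum _ (fun i _ => integrable_finset_sum _ (fun k _ =>
      integrable_finset_sum _ (fun j _ => integrable_finset_sum _ (fun l _ =>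
        (integrable_mono4 μ hsupp i j k l).const_mul _))))
  have hgint : Integrable g μ := by
    have h := hTint.re
    simpa using h
  have hg2int : Integrable (fun u => (g u)^2) μ := by
    have h := hT2int.re
    have he : (fun u => RCLike.re ((expval P u)^2)) = fun u => (g u)^2 := by
      funext u
      rw [hreal u]
      norm_cast
    rwa [he] at h
  have hIg : ∫ u, g u ∂μ = (r:ℝ) / D := by
    have h1 : (∫ u, g u ∂μ) = RCLike.re (∫ u, expval P u ∂μ) := by
      rw [← integral_re hTint]
      rfl
    rw [h1, integral_expval μ hsupp hinv hD P, htr]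
    have h2 : ((D:ℂ))⁻¹ * (r:ℂ) = (((r:ℝ)/D : ℝ) : ℂ) := by
      push_cast
      ring
    rw [h2]
    norm_cast
  have hIg2 : ∫ u, (g u)^2 ∂μ = ((r:ℝ)^2 + r) / ((D:ℝ)^2 + D) := by
    have h0 : (fun u => (g u)^2) = fun u => RCLike.re ((expval P u)^2) := by
      funext u
      rw [hreal u]
      norm_cast
    rw [h0, integral_re hT2int, integral_expval_sq μ hsupp hinv hD P, htr, htrPP]
    have h2 : ((D:ℂ)^2 + (D:ℂ))⁻¹ * ((r:ℂ)^2 + (r:ℂ))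
        = ((((r:ℝ)^2 + r) / ((D:ℝ)^2 + D) : ℝ) : ℂ) := by
      push_cast
      rw [div_eq_mul_inv]
      ring
    rw [h2]
    norm_cast
  have hsmul : ∀ (x : ℝ) (M : Matrix (Fin D) (Fin D) ℂ), (x • M) = ((x:ℂ) • M) := by
    intro x M
    ext i j
    simp [Matrix.smul_apply, Complex.real_smul]
  have hone : ∀ u : EuclideanSpace ℂ (Fin D),
      (Matrix.toEuclideanLin (1 : Matrix (Fin D) (Fin D) ℂ)) u = u := by
    intro u
    simp [Matrix.toEuclideanLin_apply, Matrix.one_mulVec]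
  have hexp : ∀ u, expval ρ u
      = ((((1 - α) / D : ℝ)) : ℂ) * (inner ℂ u u) + (((α / r : ℝ)) : ℂ) * expval P u := by
    intro u
    show (inner ℂ u ((Matrix.toEuclideanLin ρ) u) : ℂ) = _
    rw [hρ, hsmul, hsmul, map_add, _root_.map_smul, _root_.map_smul, LinearMap.add_apply,
      LinearMap.smul_apply, LinearMap.smul_apply, inner_add_right, inner_smul_right,
      inner_smul_right, hone u]
    rfl
  have hae : ∀ᵐ u ∂μ, (D:ℝ) * (expval ρ u).re = (1 - α) + ((D:ℝ) * (α/r)) * g u := by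
    filter_upwards [hsupp] with u hu
    have h1 : expval ρ u = ((((1 - α) / D + (α / r) * g u : ℝ)) : ℂ) := by
      rw [hexp u, inner_self_eq_norm_sq_to_K, hu, hreal u]
      push_cast
      ring
    rw [h1, Complex.ofReal_re]
    field_simp
  have hint1 : ∫ u, (D:ℝ) * (expval ρ u).re ∂μ = (1 - α) + ((D:ℝ) * (α/r)) * ((r:ℝ)/D) := by
    rw [integral_congr_ae hae,
      integral_add (integrable_const _) (hgint.const_mul _),
      integral_const, integral_const_mul, hIg]
    simp
  have hint2 : ∫ u, ((D:ℝ) * (expval ρ u).re)^2 ∂μ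
      = ((1-α)^2 + (2*(1-α)*((D:ℝ)*(α/r))) * ((r:ℝ)/D))
        + ((D:ℝ)*(α/r))^2 * (((r:ℝ)^2 + r)/((D:ℝ)^2 + D)) := by
    have hae2 : ∀ᵐ u ∂μ, ((D:ℝ) * (expval ρ u).re)^2
        = ((1-α)^2 + (2*(1-α)*((D:ℝ)*(α/r))) * g u) + ((D:ℝ)*(α/r))^2 * (g u)^2 := by
      filter_upwards [hae] with u h
      rw [h]
      ring
    have hint_a : Integrable (fun u => (1-α)^2 + (2*(1-α)*((D:ℝ)*(α/r))) * g u) μ :=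
      (integrable_const _).add (hgint.const_mul _)
    rw [integral_congr_ae hae2,
      integral_add hint_a (hg2int.const_mul _),
      integral_add (integrable_const _) (hgint.const_mul _),
      integral_const, integral_const_mul, integral_const_mul, hIg, hIg2]
    simp
  rw [hint1, hint2]
  have harith := final_arith (D:ℝ) (r:ℝ) α (by exact_mod_cast hr) (by exact_mod_cast hrD) hα0
  calc ((1-α)^2 + (2*(1-α)*((D:ℝ)*(α/r))) * ((r:ℝ)/D))
        + ((D:ℝ)*(α/r))^2 * (((r:ℝ)^2 + r)/((D:ℝ)^2 + D))
        - ((1 - α) + ((D:ℝ) * (α/r)) * ((r:ℝ)/D))^2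
      = ((D:ℝ) * (α/r))^2 * ((((r:ℝ)^2 + r))/((D:ℝ)^2 + (D:ℝ)) - ((r:ℝ)/(D:ℝ))^2) := by
        ring
  _ ≤ α^2 / r := harith
end

section
/- Let D ≥ 1, let ρ be a density matrix on ℂ^D, let B > 0 and ε ∈ (0,1], and let O be a Hermitian D×D matrix with tr(O²) ≤ B and eigendecomposition O = Σ_{i=1}^D w_i · ω_i ω_i*, where (ω_i) is an orthonormal basis of eigenvectors with eigenvalues w_i ∈ ℝ. Suppose for every index i with |w_i| > ε/2 we have a real number ô_i with |ô_i − ⟨ω_i, ρ ω_i⟩| ≤ ε²/(4B). Then |Σ_{i : |w_i| > ε/2} w_i ô_i − tr(O ρ)| ≤ ε. -/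
open MeasureTheory Matrix
open scoped ComplexOrder

lemma trace_outer_aux {D : ℕ} (v : EuclideanSpace ℂ (Fin D)) (ρ : Matrix (Fin D) (Fin D) ℂ) :
    (Matrix.of (fun a b => v a * (starRingEnd ℂ) (v b)) * ρ).trace = expval ρ v := by
  simp only [expval, Matrix.toEuclideanLin_apply, PiLp.inner_apply, Matrix.trace, Matrix.diag,
    Matrix.mul_apply, Matrix.of_apply, Matrix.mulVec, dotProduct, Finset.mul_sum,
    RCLike.inner_apply, PiLp.toLp_apply, Finset.sum_mul]
  rw [Finset.sum_comm]
  exact Finset.sum_congr rfl fun a _ => Finset.sum_congr rfl fun b _ => by ring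

lemma trace_outer_outer_aux {D : ℕ} (u v : EuclideanSpace ℂ (Fin D)) :
    (Matrix.of (fun a b => u a * (starRingEnd ℂ) (u b))
      * Matrix.of (fun a b => v a * (starRingEnd ℂ) (v b))).trace
      = (inner ℂ v u : ℂ) * (inner ℂ u v : ℂ) := by
  simp only [Matrix.trace, Matrix.diag, Matrix.mul_apply, Matrix.of_apply,
    PiLp.inner_apply, RCLike.inner_apply]
  rw [Finset.sum_mul_sum]
  exact Finset.sum_congr rfl fun a _ => Finset.sum_congr rfl fun b _ => by ring

lemma expval_eq_aux {D : ℕ} (A : Matrix (Fin D) (Fin D) ℂ) (u : EuclideanSpace ℂ (Fin D)) :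
    expval A u = ∑ b, ∑ a, (starRingEnd ℂ) (u b) * (A b a * u a) := by
  simp [expval, Matrix.toEuclideanLin_apply, PiLp.inner_apply, Matrix.mulVec, dotProduct,
    Finset.mul_sum, RCLike.inner_apply, PiLp.toLp_apply]
  exact Finset.sum_congr rfl fun b _ => by
    rw [Finset.sum_mul]; exact Finset.sum_congr rfl fun a _ => by ring

lemma sum_outer_complete_aux {D : ℕ} (ω : Fin D → EuclideanSpace ℂ (Fin D))
    (hon : Orthonormal ℂ ω) (a b : Fin D) :
    ∑ i, ω i a * (starRingEnd ℂ) (ω i b) = if a = b then 1 else 0 := by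
  classical
  set V : Matrix (Fin D) (Fin D) ℂ := Matrix.of (fun a i => ω i a) with hV
  have h1 : Vᴴ * V = 1 := by
    ext i j
    have := (orthonormal_iff_ite (𝕜 := ℂ)).mp hon i j
    simp only [PiLp.inner_apply, RCLike.inner_apply] at this
    simp only [Matrix.mul_apply, Matrix.conjTranspose_apply, hV, Matrix.of_apply,
      Matrix.one_apply]
    simpa only [starRingEnd_apply, mul_comm] using this
  have h2 : V * Vᴴ = 1 := mul_eq_one_comm.mp h1
  have h3 := congrFun (congrFun h2 a) b
  simpa [Matrix.mul_apply, Matrix.conjTranspose_apply, hV, Matrix.one_apply] using h3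

lemma sum_expval_eq_trace_aux {D : ℕ} (ρ : Matrix (Fin D) (Fin D) ℂ)
    (ω : Fin D → EuclideanSpace ℂ (Fin D)) (hon : Orthonormal ℂ ω) :
    ∑ i, expval ρ (ω i) = ρ.trace := by
  classical
  simp only [expval_eq_aux]
  rw [Finset.sum_comm]
  have : ∀ b : Fin D, ∑ i, ∑ a, (starRingEnd ℂ) (ω i b) * (ρ b a * ω i a)
      = ∑ a, ρ b a * ∑ i, ω i a * (starRingEnd ℂ) (ω i b) := by
    intro b
    rw [Finset.sum_comm]
    refine Finset.sum_congr rfl fun a _ => ?_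
    rw [Finset.mul_sum]
    exact Finset.sum_congr rfl fun i _ => by ring
  simp [this, sum_outer_complete_aux ω hon, mul_ite, mul_one, mul_zero, Matrix.trace,
    Matrix.diag]

lemma expval_nonneg_aux {D : ℕ} {ρ : Matrix (Fin D) (Fin D) ℂ} (hρ : ρ.PosSemidef)
    (u : EuclideanSpace ℂ (Fin D)) : 0 ≤ expval ρ u := by
  have h := hρ.dotProduct_mulVec_nonneg ((WithLp.equiv 2 (Fin D → ℂ)) u)
  have he : expval ρ u = star ((WithLp.equiv 2 (Fin D → ℂ)) u) ⬝ᵥ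
      ρ.mulVec ((WithLp.equiv 2 (Fin D → ℂ)) u) := by
    simp only [expval, Matrix.toEuclideanLin_apply, PiLp.inner_apply, dotProduct,
      RCLike.inner_apply, PiLp.toLp_apply,
      starRingEnd_apply, Pi.star_apply]
    exact Finset.sum_congr rfl fun x _ => mul_comm _ _
  rw [he]
  exact h

/-- error analysis of estimation protocol II in the proof of Eq. (6):
if `O = Σ_i w_i ω_i ω_i*` with `(ω_i)` orthonormal, `tr(O²) ≤ B`, and for each `i` with
`|w_i| > ε/2` the number `ô_i` approximates `⟨ω_i, ρ ω_i⟩` up to `ε²/(4B)`, then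
`|Σ_{i : |w_i| > ε/2} w_i ô_i − tr(Oρ)| ≤ ε`. -/
theorem protocol_II_error (D : ℕ) (hD : 1 ≤ D)
    (ρ : Matrix (Fin D) (Fin D) ℂ) (hρ : ρ.PosSemidef) (hρtr : ρ.trace = 1)
    (B ε : ℝ) (hB : 0 < B) (hε : 0 < ε) (hε1 : ε ≤ 1)
    (O : Matrix (Fin D) (Fin D) ℂ)
    (w : Fin D → ℝ) (ω : Fin D → EuclideanSpace ℂ (Fin D)) (hon : Orthonormal ℂ ω)
    (hO : O = ∑ i, (w i : ℂ) •
      Matrix.of (fun a b => ω i a * (starRingEnd ℂ) (ω i b)))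
    (htr : ((O * O).trace).re ≤ B)
    (ohat : Fin D → ℝ)
    (hohat : ∀ i, ε / 2 < |w i| → |ohat i - (expval ρ (ω i)).re| ≤ ε ^ 2 / (4 * B)) :
    |∑ i ∈ Finset.univ.filter (fun i => ε / 2 < |w i|), w i * ohat i
        - ((O * ρ).trace).re| ≤ ε := by
  classical
  set e : Fin D → ℝ := fun i => (expval ρ (ω i)).re with he
  -- trace of O ρ
  have hOρ : (O * ρ).trace = ∑ i, (w i : ℂ) * expval ρ (ω i) := by
    rw [hO, Matrix.sum_mul, Matrix.trace_sum]
    exact Finset.sum_congr rfl fun i _ => by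
      rw [Matrix.smul_mul, Matrix.trace_smul, trace_outer_aux, smul_eq_mul]
  have hOρre : ((O * ρ).trace).re = ∑ i, w i * e i := by
    rw [hOρ, Complex.re_sum]
    exact Finset.sum_congr rfl fun i _ => by simp [Complex.mul_re, he]
  -- trace of O²
  have hite := (orthonormal_iff_ite (𝕜 := ℂ)).mp hon
  have hOO : (O * O).trace = ∑ i, ((w i : ℂ))^2 := by
    rw [hO, Matrix.sum_mul, Matrix.trace_sum]
    have : ∀ i : Fin D, (((w i : ℂ) • Matrix.of (fun a b => ω i a * (starRingEnd ℂ) (ω i b)))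
        * ∑ j, (w j : ℂ) • Matrix.of (fun a b => ω j a * (starRingEnd ℂ) (ω j b))).trace
        = ∑ j, (w i : ℂ) * (w j : ℂ) *
          ((inner ℂ (ω j) (ω i) : ℂ) * (inner ℂ (ω i) (ω j) : ℂ)) := by
      intro i
      rw [Matrix.mul_sum, Matrix.trace_sum]
      refine Finset.sum_congr rfl fun j _ => ?_
      rw [Matrix.smul_mul, Matrix.mul_smul, Matrix.trace_smul, Matrix.trace_smul,
        trace_outer_outer_aux]
      simp [smul_eq_mul]; ring
    rw [Finset.sum_congr rfl fun i _ => this i]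
    refine Finset.sum_congr rfl fun i _ => ?_
    simp [hite, eq_comm]
    ring
  have hw2B : ∑ i, (w i)^2 ≤ B := by
    have : ((O * O).trace).re = ∑ i, (w i)^2 := by
      rw [hOO, Complex.re_sum]
      exact Finset.sum_congr rfl fun i _ => by
        simp [← Complex.ofReal_pow]
    linarith [htr, this.symm.le]
  -- properties of e
  have he_nonneg : ∀ i, 0 ≤ e i := fun i => by
    have := expval_nonneg_aux hρ (ω i)
    exact (Complex.le_def.mp this).1
  have hsum_e : ∑ i, e i = 1 := by
    have := sum_expval_eq_trace_aux ρ ω hon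
    have h2 : (∑ i, expval ρ (ω i)).re = (1 : ℂ).re := by rw [this, hρtr]
    simpa [Complex.re_sum, he] using h2
  -- the index set
  set S := Finset.univ.filter (fun i => ε / 2 < |w i|) with hS
  -- bound on ∑_{i ∈ S} |w i|
  have hsum_absw : ∑ i ∈ S, |w i| ≤ 2 * B / ε := by
    have h1 : ∀ i ∈ S, |w i| ≤ (2 / ε) * (w i)^2 := by
      intro i hi
      have hwi : ε / 2 < |w i| := (Finset.mem_filter.mp hi).2
      have habs : 0 ≤ |w i| := abs_nonneg _
      have hsq : (w i)^2 = |w i|^2 := (sq_abs _).symm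
      have h3 : (ε/2) * |w i| ≤ |w i| * |w i| := mul_le_mul_of_nonneg_right hwi.le habs
      have h4 : (ε/2) * |w i| ≤ (w i)^2 := by nlinarith
      calc |w i| = (2/ε) * ((ε/2) * |w i|) := by field_simp
        _ ≤ (2/ε) * (w i)^2 := by gcongr
    calc ∑ i ∈ S, |w i| ≤ ∑ i ∈ S, (2 / ε) * (w i)^2 := Finset.sum_le_sum h1
      _ = (2 / ε) * ∑ i ∈ S, (w i)^2 := by rw [Finset.mul_sum]
      _ ≤ (2 / ε) * ∑ i, (w i)^2 := by
          have : ∑ i ∈ S, (w i)^2 ≤ ∑ i, (w i)^2 :=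
            Finset.sum_le_sum_of_subset_of_nonneg (Finset.subset_univ S)
              (fun i _ _ => sq_nonneg _)
          exact mul_le_mul_of_nonneg_left this (by positivity)
      _ ≤ (2 / ε) * B := mul_le_mul_of_nonneg_left hw2B (by positivity)
      _ = 2 * B / ε := by ring
  -- decomposition
  have hdecomp : ∑ i ∈ S, w i * ohat i - ∑ i, w i * e i
      = ∑ i ∈ S, w i * (ohat i - e i)
        - ∑ i ∈ Finset.univ.filter (fun i => ¬ (ε / 2 < |w i|)), w i * e i := by
    have hsplit : ∑ i, w i * e i
        = ∑ i ∈ S, w i * e i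
          + ∑ i ∈ Finset.univ.filter (fun i => ¬ (ε / 2 < |w i|)), w i * e i :=
      (Finset.sum_filter_add_sum_filter_not Finset.univ _ _).symm
    have hsub : ∑ i ∈ S, w i * (ohat i - e i)
        = ∑ i ∈ S, w i * ohat i - ∑ i ∈ S, w i * e i := by
      rw [← Finset.sum_sub_distrib]
      exact Finset.sum_congr rfl fun i _ => by ring
    rw [hsplit, hsub]; ring
  -- bound 1
  have hb1 : |∑ i ∈ S, w i * (ohat i - e i)| ≤ ε / 2 := by
    calc |∑ i ∈ S, w i * (ohat i - e i)| ≤ ∑ i ∈ S, |w i * (ohat i - e i)| :=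
          Finset.abs_sum_le_sum_abs _ _
      _ = ∑ i ∈ S, |w i| * |ohat i - e i| := by
          exact Finset.sum_congr rfl fun i _ => abs_mul _ _
      _ ≤ ∑ i ∈ S, |w i| * (ε ^ 2 / (4 * B)) := by
          refine Finset.sum_le_sum fun i hi => ?_
          exact mul_le_mul_of_nonneg_left (hohat i (Finset.mem_filter.mp hi).2) (abs_nonneg _)
      _ = (∑ i ∈ S, |w i|) * (ε ^ 2 / (4 * B)) := by rw [Finset.sum_mul]
      _ ≤ (2 * B / ε) * (ε ^ 2 / (4 * B)) := by
          refine mul_le_mul_of_nonneg_right hsum_absw (by positivity)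
      _ = ε / 2 := by field_simp; ring
  -- bound 2
  have hb2 : |∑ i ∈ Finset.univ.filter (fun i => ¬ (ε / 2 < |w i|)), w i * e i| ≤ ε / 2 := by
    set T := Finset.univ.filter (fun i => ¬ (ε / 2 < |w i|)) with hT
    calc |∑ i ∈ T, w i * e i| ≤ ∑ i ∈ T, |w i * e i| := Finset.abs_sum_le_sum_abs _ _
      _ = ∑ i ∈ T, |w i| * e i := by
          refine Finset.sum_congr rfl fun i _ => ?_
          rw [abs_mul, abs_of_nonneg (he_nonneg i)]
      _ ≤ ∑ i ∈ T, (ε / 2) * e i := by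
          refine Finset.sum_le_sum fun i hi => ?_
          have : ¬ (ε / 2 < |w i|) := (Finset.mem_filter.mp hi).2
          exact mul_le_mul_of_nonneg_right (not_lt.mp this) (he_nonneg i)
      _ = (ε / 2) * ∑ i ∈ T, e i := by rw [Finset.mul_sum]
      _ ≤ (ε / 2) * 1 := by
          refine mul_le_mul_of_nonneg_left ?_ (by positivity)
          rw [← hsum_e]
          exact Finset.sum_le_sum_of_subset_of_nonneg (Finset.subset_univ T)
            (fun i _ _ => he_nonneg i)
      _ = ε / 2 := by ring
  rw [hOρre, hdecomp]
  calc |∑ i ∈ S, w i * (ohat i - e i)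
      - ∑ i ∈ Finset.univ.filter (fun i => ¬ (ε / 2 < |w i|)), w i * e i|
      ≤ |∑ i ∈ S, w i * (ohat i - e i)|
        + |∑ i ∈ Finset.univ.filter (fun i => ¬ (ε / 2 < |w i|)), w i * e i| :=
        abs_sub _ _
    _ ≤ ε / 2 + ε / 2 := add_le_add hb1 hb2
    _ = ε := by ring
end
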